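/- arXiv:2603.09153 — 4 statements merged into one kernel-verified Lean document; each statement's English description precedes it below -/
import Mathlib

section
/- Let G be a digraph, p ≥ 0, and ω ∈ Ω_p(G). For vertices a, b let ω_{a,b} denote the sum of all terms of ω whose elementary path starts at a and ends at b. Then each ω_{a,b} belongs to Ω_p(G) and ω = Σ_{a,b} ω_{a,b}; in particular, every ∂-invariant p-path is a sum of ∂-invariant clusters. -/
open scoped BigOperators
open Classical

/-- A digraph: an irreflexive relation on a vertex type. -/
structure Dgraph (V : Type*) where
  Adj : V → V → Prop
  loopless : ∀ v : V, ¬ Adj v v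

/-- An elementary `p`-path on the vertex type `V`: a sequence of `p+1` vertices. -/
abbrev EPath (V : Type*) (p : ℕ) := Fin (p + 1) → V

/-- A path is regular if consecutive vertices are distinct. -/
def IsRegularPath {V : Type*} {p : ℕ} (f : EPath V p) : Prop :=
  ∀ k : Fin p, f k.castSucc ≠ f k.succ

/-- A path is allowed if consecutive vertices are joined by an arrow. -/
def IsAllowedPath {V : Type*} (G : Dgraph V) {p : ℕ} (f : EPath V p) : Prop :=
  ∀ k : Fin p, G.Adj (f k.castSucc) (f k.succ)

/-- The projection of `Λ_p` onto its regular part; this realizes `R_p = Λ_p / I_p`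
as the subspace of `Λ_p` spanned by the regular elementary paths. -/
noncomputable def regProj (K : Type*) [Field K] (V : Type*) (p : ℕ) :
    (EPath V p →₀ K) →ₗ[K] (EPath V p →₀ K) :=
  Finsupp.linearCombination K
    (fun f : EPath V p => if IsRegularPath f then Finsupp.single f (1 : K) else 0)

/-- The (non-reduced) boundary operator on `Λ`. -/
noncomputable def bdryFull (K : Type*) [Field K] (V : Type*) (p : ℕ) :
    (EPath V (p + 1) →₀ K) →ₗ[K] (EPath V p →₀ K) :=
  Finsupp.linearCombination K
    (fun f : EPath V (p + 1) =>
      ∑ q : Fin (p + 2), ((-1 : K) ^ (q : ℕ)) • Finsupp.single (f ∘ q.succAbove) (1 : K))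

/-- The boundary operator `∂` on the regular part (i.e. on `R`). -/
noncomputable def bdry (K : Type*) [Field K] (V : Type*) (p : ℕ) :
    (EPath V (p + 1) →₀ K) →ₗ[K] (EPath V p →₀ K) :=
  (regProj K V p).comp (bdryFull K V p)

/-- The span of the regular elementary paths: the realization of `R_p` inside `Λ_p`. -/
noncomputable def regularMod (K : Type*) [Field K] (V : Type*) (p : ℕ) :
    Submodule K (EPath V p →₀ K) :=
  Submodule.span K {x | ∃ f : EPath V p, IsRegularPath f ∧ x = Finsupp.single f (1 : K)}

/-- `A_p(G)`: the span of the allowed elementary paths. -/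
noncomputable def allowedMod (K : Type*) [Field K] (V : Type*) (G : Dgraph V) (p : ℕ) :
    Submodule K (EPath V p →₀ K) :=
  Submodule.span K {x | ∃ f : EPath V p, IsAllowedPath G f ∧ x = Finsupp.single f (1 : K)}

/-- `Ω_p(G)`: the space of ∂-invariant `p`-paths. -/
noncomputable def Omega (K : Type*) [Field K] (V : Type*) (G : Dgraph V) :
    (p : ℕ) → Submodule K (EPath V p →₀ K)
  | 0 => allowedMod K V G 0
  | (p + 1) => allowedMod K V G (p + 1) ⊓ (allowedMod K V G p).comap (bdry K V p)

/-- An `(a,b)`-cluster: every elementary path occurring with nonzero coefficient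
starts at `a` and ends at `b`. -/
def IsCluster {K : Type*} [Field K] {V : Type*} {p : ℕ} (a b : V) (ω : EPath V p →₀ K) : Prop :=
  ∀ f ∈ ω.support, f 0 = a ∧ f (Fin.last p) = b

/-- A minimal ∂-invariant path: a nonzero element of `Ω_p` such that no nonzero
∂-invariant path is supported on a proper (nonempty) subset of its support. -/
def IsMinimal (K : Type*) [Field K] {V : Type*} (G : Dgraph V) (p : ℕ)
    (ω : EPath V p →₀ K) : Prop :=
  ω ∈ Omega K V G p ∧ ω ≠ 0 ∧
    ∀ ω' : EPath V p →₀ K, ω' ∈ Omega K V G p → ω' ≠ 0 → ¬ (ω'.support ⊂ ω.support)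

/-- A digraph map: every arrow goes to an arrow or collapses to a vertex. -/
structure DgraphMap {V W : Type*} (X : Dgraph V) (Y : Dgraph W) where
  toFun : V → W
  map_adj : ∀ ⦃u v : V⦄, X.Adj u v → Y.Adj (toFun u) (toFun v) ∨ toFun u = toFun v

/-- The induced map `f_* : R_n(X) → R_n(Y)` (in the regular-part realization):
push forward elementary paths and kill the irregular ones. -/
noncomputable def inducedMap (K : Type*) [Field K] {V W : Type*} (φ : V → W) (p : ℕ) :
    (EPath V p →₀ K) →ₗ[K] (EPath W p →₀ K) :=
  (regProj K W p).comp (Finsupp.lmapDomain K K (fun f : EPath V p => φ ∘ f))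

/-- Cyclic successor on `Fin m`. -/
def finRot {m : ℕ} (k : Fin m) : Fin m := ⟨((k : ℕ) + 1) % m, Nat.mod_lt _ k.pos⟩

/-- The vertices of the trapezohedron `T_m`. -/
inductive TVert (m : ℕ) : Type
  | a : TVert m
  | b : TVert m
  | vi : Fin m → TVert m
  | vj : Fin m → TVert m

/-- The adjacency relation of the trapezohedron `T_m`:
`a → i_k`, `i_k → j_k`, `i_{k+1} → j_k`, `j_k → b` (indices mod `m`). -/
def TrapAdj (m : ℕ) : TVert m → TVert m → Prop
  | TVert.a, TVert.vi _ => True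
  | TVert.vi k, TVert.vj l => k = l ∨ k = finRot l
  | TVert.vj _, TVert.b => True
  | _, _ => False

/-- The trapezohedron digraph `T_m`. -/
def Trap (m : ℕ) : Dgraph (TVert m) where
  Adj := TrapAdj m
  loopless := by intro v h; cases v <;> exact h

/-- The trapezohedral path `τ_m`. -/
noncomputable def tau (K : Type*) [Field K] (m : ℕ) : EPath (TVert m) 3 →₀ K :=
  ∑ k : Fin m,
    (Finsupp.single ![TVert.a, TVert.vi k, TVert.vj k, TVert.b] (1 : K)
      - Finsupp.single ![TVert.a, TVert.vi (finRot k), TVert.vj k, TVert.b] (1 : K))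

/-- The submodule of `(a,b)`-clusters. -/
def clusterMod (K : Type*) [Field K] (V : Type*) (p : ℕ) (a b : V) :
    Submodule K (EPath V p →₀ K) where
  carrier := {ω | ∀ f ∈ ω.support, f 0 = a ∧ f (Fin.last p) = b}
  add_mem' := by
    intro x y hx hy f hf
    rcases Finset.mem_union.mp (Finsupp.support_add hf) with h | h
    exacts [hx f h, hy f h]
  zero_mem' := by intro f hf; simp at hf
  smul_mem' := by
    intro c x hx f hf
    exact hx f (Finsupp.support_smul hf)

/-- `Ω₃^{(a,b)}(G)`: the ∂-invariant `(a,b)`-clusters. -/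
noncomputable def OmegaAB (K : Type*) [Field K] (V : Type*) (G : Dgraph V) (a b : V) :
    Submodule K (EPath V 3 →₀ K) :=
  Omega K V G 3 ⊓ clusterMod K V 3 a b

/-- Out-neighbourhood. -/
def Nplus {V : Type*} (G : Dgraph V) (v : V) : Set V := {w | G.Adj v w}

/-- In-neighbourhood. -/
def Nminus {V : Type*} (G : Dgraph V) (v : V) : Set V := {w | G.Adj w v}

/-- `E(X,Y)`: the edges of `G` starting in `X` and ending in `Y`. -/
def Ebetween {V : Type*} (G : Dgraph V) (X Y : Set V) : Set (V × V) :=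
  {p | p.1 ∈ X ∧ p.2 ∈ Y ∧ G.Adj p.1 p.2}

/-- `A = N⁺(a) \ {b}`. -/
def setA {V : Type*} (G : Dgraph V) (a b : V) : Set V := Nplus G a \ {b}

/-- `B = N⁻(b) \ {a}`. -/
def setB {V : Type*} (G : Dgraph V) (a b : V) : Set V := Nminus G b \ {a}

/-- The vertex set of `H = Ind(A \ B, B \ A)`. -/
def Hverts {V : Type*} (G : Dgraph V) (a b : V) : Set V :=
  (setA G a b \ setB G a b) ∪ (setB G a b \ setA G a b)

/-- `H = Ind(A \ B, B \ A)` regarded as an undirected (simple) graph on its vertex set. -/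
def Hgraph {V : Type*} (G : Dgraph V) (a b : V) : SimpleGraph (Hverts G a b) where
  Adj u v :=
    ((u : V) ∈ setA G a b \ setB G a b ∧ (v : V) ∈ setB G a b \ setA G a b ∧ G.Adj u v)
      ∨ ((v : V) ∈ setA G a b \ setB G a b ∧ (u : V) ∈ setB G a b \ setA G a b ∧ G.Adj v u)
  symm := ⟨by intro u v h; exact h.symm⟩
  loopless := ⟨by
    intro u h
    rcases h with ⟨_, _, h3⟩ | ⟨_, _, h3⟩ <;> exact G.loopless _ h3⟩

/-- The set of vertices of `G` belonging to the connected component `c` of `H`. -/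
def compVerts {V : Type*} (G : Dgraph V) (a b : V)
    (c : (Hgraph G a b).ConnectedComponent) : Set V :=
  {v | ∃ h : v ∈ Hverts G a b, (Hgraph G a b).connectedComponentMk ⟨v, h⟩ = c}

/-- The set `S_k` associated to a connected component of `H`. -/
def Sset {V : Type*} (G : Dgraph V) (a b : V)
    (c : (Hgraph G a b).ConnectedComponent) : Set (V × V) :=
  Ebetween G (compVerts G a b c ∩ (setA G a b \ setB G a b))
      ((Nplus G a ∪ {a}) ∩ Nminus G b)
    ∪ Ebetween G (Nplus G a ∩ (Nminus G b ∪ {b}))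
      (compVerts G a b c ∩ (setB G a b \ setA G a b))


section AuxProofs

variable {K : Type*} [Field K] {V : Type*}

lemma mem_allowedMod_iff (G : Dgraph V) (p : ℕ) (x : EPath V p →₀ K) :
    x ∈ allowedMod K V G p ↔ ∀ f ∈ x.support, IsAllowedPath G f := by
  constructor
  · intro hx
    let M : Submodule K (EPath V p →₀ K) :=
      { carrier := {ω | ∀ f ∈ ω.support, IsAllowedPath G f}
        add_mem' := by
          intro x y hx hy f hf
          rcases Finset.mem_union.mp (Finsupp.support_add hf) with h | h
          exacts [hx f h, hy f h]
        zero_mem' := by intro f hf; simp at hf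
        smul_mem' := by
          intro c x hx f hf
          exact hx f (Finsupp.support_smul hf) }
    have hle : allowedMod K V G p ≤ M := by
      rw [allowedMod, Submodule.span_le]
      rintro _ ⟨f, hf, rfl⟩ g hg
      rw [Finsupp.support_single_ne_zero _ one_ne_zero, Finset.mem_singleton] at hg
      subst hg; exact hf
    exact hle hx
  · intro h
    have hx : x = ∑ f ∈ x.support, Finsupp.single f (x f) := (Finsupp.sum_single x).symm
    rw [hx]
    refine Submodule.sum_mem _ fun f hf => ?_
    have h1 : Finsupp.single f (x f) = (x f) • Finsupp.single f (1 : K) := by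
      rw [Finsupp.smul_single, smul_eq_mul, mul_one]
    rw [h1]
    exact Submodule.smul_mem _ _ (Submodule.subset_span ⟨f, h f hf, rfl⟩)

lemma regProj_eq_filter (p : ℕ) (x : EPath V p →₀ K) :
    regProj K V p x = x.filter IsRegularPath := by
  induction x using Finsupp.induction_linear with
  | zero => rw [map_zero, Finsupp.filter_zero]
  | add a b ha hb => rw [map_add, Finsupp.filter_add, ha, hb]
  | single f c =>
    rw [regProj, Finsupp.linearCombination_single]
    by_cases h : IsRegularPath f
    · rw [if_pos h, Finsupp.filter_single_of_pos _ h, Finsupp.smul_single, smul_eq_mul, mul_one]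
    · rw [if_neg h, Finsupp.filter_single_of_neg _ h, smul_zero]

lemma bdryFull_single_apply_eq_zero (G : Dgraph V) (p : ℕ) (f : EPath V (p + 1))
    (g : EPath V p) (hf : IsAllowedPath G f) (hg : ¬ IsAllowedPath G g)
    (hne : ¬ (f 0 = g 0 ∧ f (Fin.last (p + 1)) = g (Fin.last p))) :
    bdryFull K V p (Finsupp.single f 1) g = 0 := by
  rw [bdryFull, Finsupp.linearCombination_single, one_smul, Finsupp.finset_sum_apply]
  refine Finset.sum_eq_zero fun q _ => ?_
  rw [Finsupp.smul_apply]
  rcases eq_or_ne (f ∘ q.succAbove) g with hq | hq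
  · exfalso
    rcases eq_or_ne q 0 with rfl | hq0
    · apply hg
      intro k
      have h1 : g k.castSucc = f k.castSucc.succ := by
        rw [← hq]; simp [Fin.succAbove_zero]
      have h2 : g k.succ = f k.succ.succ := by
        rw [← hq]; simp [Fin.succAbove_zero]
      rw [h1, h2, Fin.succ_castSucc]
      exact hf k.succ
    rcases eq_or_ne q (Fin.last (p + 1)) with rfl | hql
    · apply hg
      intro k
      have h1 : g k.castSucc = f k.castSucc.castSucc := by
        rw [← hq]; simp [Fin.succAbove_last]
      have h2 : g k.succ = f k.succ.castSucc := by
        rw [← hq]; simp [Fin.succAbove_last]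
      rw [h1, h2, ← Fin.succ_castSucc]
      exact hf k.castSucc
    · apply hne
      constructor
      · have h0 : q.succAbove 0 = 0 := by
          rw [Fin.succAbove_of_castSucc_lt]
          · exact Fin.castSucc_zero
          · rw [Fin.castSucc_zero]
            exact Fin.pos_of_ne_zero hq0
        have := congrFun hq 0
        rw [Function.comp_apply, h0] at this
        exact this
      · have hl : q.succAbove (Fin.last p) = Fin.last (p + 1) := by
          rw [Fin.succAbove_of_le_castSucc, Fin.succ_last]
          rw [Fin.le_castSucc_iff, Fin.succ_last]
          exact lt_of_le_of_ne (Fin.le_last q) hql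
        have := congrFun hq (Fin.last p)
        rw [Function.comp_apply, hl] at this
        exact this
  · rw [Finsupp.single_apply, if_neg hq, smul_zero]

lemma bdryFull_apply_eq_zero (G : Dgraph V) (p : ℕ) (x : EPath V (p + 1) →₀ K)
    (hx : ∀ f ∈ x.support, IsAllowedPath G f) (g : EPath V p)
    (hg : ¬ IsAllowedPath G g)
    (hne : ∀ f ∈ x.support, ¬ (f 0 = g 0 ∧ f (Fin.last (p + 1)) = g (Fin.last p))) :
    bdryFull K V p x g = 0 := by
  conv_lhs => rw [← Finsupp.sum_single x]
  rw [Finsupp.sum, map_sum, Finsupp.finset_sum_apply]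
  refine Finset.sum_eq_zero fun f hf => ?_
  have h1 : Finsupp.single f (x f) = (x f) • Finsupp.single f (1 : K) := by
    rw [Finsupp.smul_single, smul_eq_mul, mul_one]
  rw [h1, map_smul, Finsupp.smul_apply,
    bdryFull_single_apply_eq_zero G p f g (hx f hf) hg (hne f hf), smul_zero]

lemma bdry_filter_mem (G : Dgraph V) (p : ℕ) (x : EPath V (p + 1) →₀ K)
    (hx : x ∈ allowedMod K V G (p + 1)) (hbx : bdry K V p x ∈ allowedMod K V G p)
    (a b : V) :
    bdry K V p (x.filter (fun f => f 0 = a ∧ f (Fin.last (p + 1)) = b))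
      ∈ allowedMod K V G p := by
  rw [mem_allowedMod_iff] at hx ⊢
  intro g hgsup
  by_contra hg
  apply Finsupp.mem_support_iff.mp hgsup
  set P := fun f : EPath V (p + 1) => f 0 = a ∧ f (Fin.last (p + 1)) = b with hP
  have hsupP : ∀ f ∈ (x.filter P).support, IsAllowedPath G f ∧ P f := by
    intro f hf
    rw [Finsupp.support_filter, Finset.mem_filter] at hf
    exact ⟨hx f hf.1, hf.2⟩
  rw [bdry, LinearMap.comp_apply, regProj_eq_filter, Finsupp.filter_apply]
  by_cases hreg : IsRegularPath g
  · rw [if_pos hreg]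
    by_cases hab : g 0 = a ∧ g (Fin.last p) = b
    · have h2 : bdryFull K V p (x.filter fun f => ¬ P f) g = 0 := by
        refine bdryFull_apply_eq_zero G p _ ?_ g hg ?_
        · intro f hf
          rw [Finsupp.support_filter, Finset.mem_filter] at hf
          exact hx f hf.1
        · intro f hf hfe
          rw [Finsupp.support_filter, Finset.mem_filter] at hf
          exact hf.2 ⟨hfe.1.trans hab.1, hfe.2.trans hab.2⟩
      have h3 : bdryFull K V p x g = 0 := by
        by_contra h3
        have hmem : g ∈ (bdry K V p x).support := by
          rw [Finsupp.mem_support_iff, bdry, LinearMap.comp_apply, regProj_eq_filter,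
            Finsupp.filter_apply, if_pos hreg]
          exact h3
        rw [mem_allowedMod_iff] at hbx
        exact hg (hbx g hmem)
      calc bdryFull K V p (x.filter P) g
          = bdryFull K V p (x.filter P) g
              + bdryFull K V p (x.filter fun f => ¬ P f) g := by rw [h2, add_zero]
        _ = bdryFull K V p x g := by
              rw [← Finsupp.add_apply, ← map_add, Finsupp.filter_pos_add_filter_neg]
        _ = 0 := h3
    · refine bdryFull_apply_eq_zero G p _ (fun f hf => (hsupP f hf).1) g hg ?_
      intro f hf hfe
      exact hab ⟨hfe.1.symm.trans (hsupP f hf).2.1, hfe.2.symm.trans (hsupP f hf).2.2⟩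
  · rw [if_neg hreg]

lemma filter_mem_allowedMod (G : Dgraph V) (p : ℕ) (x : EPath V p →₀ K)
    (hx : x ∈ allowedMod K V G p) (P : EPath V p → Prop) [DecidablePred P] :
    x.filter P ∈ allowedMod K V G p := by
  rw [mem_allowedMod_iff] at hx ⊢
  intro f hf
  rw [Finsupp.support_filter, Finset.mem_filter] at hf
  exact hx f hf.1

lemma filter_finsum_eq (p : ℕ) (ω : EPath V p →₀ K) :
    ω = ∑ᶠ ab : V × V, ω.filter (fun f => f 0 = ab.1 ∧ f (Fin.last p) = ab.2) := by
  classical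
  set S : Finset (V × V) := ω.support.image (fun f => (f 0, f (Fin.last p))) with hS
  have hsupp : (Function.support fun ab : V × V =>
      ω.filter (fun f => f 0 = ab.1 ∧ f (Fin.last p) = ab.2)) ⊆ ↑S := by
    intro ab hab
    rw [Function.mem_support] at hab
    obtain ⟨f, hf⟩ := Finsupp.support_nonempty_iff.mpr hab
    rw [Finsupp.support_filter, Finset.mem_filter] at hf
    rw [Finset.mem_coe, hS, Finset.mem_image]
    exact ⟨f, hf.1, by rw [hf.2.1, hf.2.2]⟩
  rw [finsum_eq_sum_of_support_subset _ hsupp]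
  ext g
  rw [Finsupp.finset_sum_apply]
  by_cases hg : g ∈ ω.support
  · rw [Finset.sum_eq_single (g 0, g (Fin.last p))]
    · rw [Finsupp.filter_apply, if_pos ⟨rfl, rfl⟩]
    · intro ab _ hne
      rw [Finsupp.filter_apply, if_neg]
      rintro ⟨h1, h2⟩
      exact hne (Prod.ext h1.symm h2.symm)
    · intro h
      exact absurd (Finset.mem_image_of_mem _ hg) h
  · rw [Finsupp.notMem_support_iff] at hg
    rw [hg]
    refine (Finset.sum_eq_zero fun ab _ => ?_).symm
    rw [Finsupp.filter_apply, hg, ite_self]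

end AuxProofs

theorem statement1 (K : Type*) [Field K] {V : Type*} (G : Dgraph V) (p : ℕ)
    (ω : EPath V p →₀ K) (hω : ω ∈ Omega K V G p) :
    (∀ a b : V, IsCluster a b (ω.filter (fun f => f 0 = a ∧ f (Fin.last p) = b)) ∧
        ω.filter (fun f => f 0 = a ∧ f (Fin.last p) = b) ∈ Omega K V G p) ∧
    ω = ∑ᶠ ab : V × V, ω.filter (fun f => f 0 = ab.1 ∧ f (Fin.last p) = ab.2) := by
  refine ⟨fun a b => ⟨?_, ?_⟩, filter_finsum_eq p ω⟩
  · intro f hf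
    rw [Finsupp.support_filter, Finset.mem_filter] at hf
    exact hf.2
  · cases p with
    | zero =>
      exact filter_mem_allowedMod G 0 ω hω (fun f => f 0 = a ∧ f (Fin.last 0) = b)
    | succ p =>
      have hω' : ω ∈ allowedMod K V G (p + 1) ⊓
          (allowedMod K V G p).comap (bdry K V p) := hω
      obtain ⟨h1, h2⟩ := Submodule.mem_inf.mp hω'
      refine Submodule.mem_inf.mpr ⟨filter_mem_allowedMod G (p + 1) ω h1 (fun f => f 0 = a ∧ f (Fin.last (p + 1)) = b), ?_⟩
      exact Submodule.mem_comap.mpr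
        (bdry_filter_mem G p ω h1 (Submodule.mem_comap.mp h2) a b)
end

section
/- For every digraph G and every p ≥ 0, the space Ω_p(G) has a K-basis consisting of minimal ∂-invariant clusters. -/
open scoped BigOperators
open Classical

section Statement3Aux

variable {K : Type*} [Field K] {V : Type*}

lemma Omega_zero (G : Dgraph V) : Omega K V G 0 = allowedMod K V G 0 := rfl

lemma Omega_succ (G : Dgraph V) (p : ℕ) :
    Omega K V G (p + 1)
      = allowedMod K V G (p + 1) ⊓ (allowedMod K V G p).comap (bdry K V p) := rfl

lemma regProj_apply (p : ℕ) (x : EPath V p →₀ K) (g : EPath V p) :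
    regProj K V p x g = if IsRegularPath g then x g else 0 := by
  classical
  rw [regProj, Finsupp.linearCombination_apply, Finsupp.sum_apply]
  rw [Finsupp.sum_eq_single g (fun f _ hfg => ?_) (fun _ => by simp)]
  · by_cases h : IsRegularPath g <;> simp [h, Finsupp.single_apply]
  · by_cases h : IsRegularPath f <;> simp [h, Finsupp.single_apply, hfg]

/-- The coefficient of `g` in `∂ e_f` (before regular projection). -/
noncomputable def Dcoef (K : Type*) [Field K] {V : Type*} (p : ℕ)
    (f : EPath V (p + 1)) (g : EPath V p) : K :=
  ∑ q : Fin (p + 2), ((-1 : K) ^ (q : ℕ)) * (if f ∘ q.succAbove = g then 1 else 0)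

lemma bdryFull_apply (p : ℕ) (x : EPath V (p + 1) →₀ K) (g : EPath V p) :
    bdryFull K V p x g = x.sum fun f c => c * Dcoef K p f g := by
  classical
  rw [bdryFull, Finsupp.linearCombination_apply, Finsupp.sum_apply]
  apply Finsupp.sum_congr
  intro f _
  simp [Dcoef, Finsupp.finset_sum_apply, Finsupp.single_apply, Finset.mul_sum,
    mul_comm, mul_assoc, mul_left_comm]

lemma bdry_apply (p : ℕ) (x : EPath V (p + 1) →₀ K) (g : EPath V p) :
    bdry K V p x g
      = if IsRegularPath g then x.sum (fun f c => c * Dcoef K p f g) else 0 := by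
  rw [bdry, LinearMap.comp_apply, regProj_apply, bdryFull_apply]

lemma allowed_tail (G : Dgraph V) {p : ℕ} {f : EPath V (p + 1)}
    (hf : IsAllowedPath G f) : IsAllowedPath G (f ∘ Fin.succ) := by
  intro k
  have h := hf k.succ
  exact h

lemma allowed_init (G : Dgraph V) {p : ℕ} {f : EPath V (p + 1)}
    (hf : IsAllowedPath G f) : IsAllowedPath G (f ∘ Fin.castSucc) := by
  intro k
  have h := hf k.castSucc
  exact h

lemma Dcoef_eq_zero (G : Dgraph V) {p : ℕ} {f : EPath V (p + 1)} {g : EPath V p}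
    (hf : IsAllowedPath G f) (hg : ¬ IsAllowedPath G g)
    (hend : ¬ (f 0 = g 0 ∧ f (Fin.last (p + 1)) = g (Fin.last p))) :
    Dcoef K p f g = 0 := by
  unfold Dcoef
  apply Finset.sum_eq_zero
  intro q _
  rw [if_neg, mul_zero]
  intro heq
  by_cases h0 : q = 0
  · subst h0
    apply hg
    have h1 : f ∘ (0 : Fin (p + 2)).succAbove = f ∘ Fin.succ := by
      funext i; simp [Fin.zero_succAbove]
    rw [h1] at heq
    rw [← heq]
    exact allowed_tail G hf
  by_cases hl : q = Fin.last (p + 1)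
  · subst hl
    apply hg
    have h1 : f ∘ (Fin.last (p + 1)).succAbove = f ∘ Fin.castSucc := by
      funext i; simp [Fin.succAbove_last]
    rw [h1] at heq
    rw [← heq]
    exact allowed_init G hf
  · apply hend
    constructor
    · have h1 : q.succAbove 0 = 0 := by
        rw [Fin.succAbove_of_castSucc_lt]
        · exact Fin.castSucc_zero
        · rw [Fin.castSucc_zero]
          exact Fin.pos_of_ne_zero h0
      have := congrFun heq 0
      simpa [Function.comp, h1] using this
    · have h1 : q.succAbove (Fin.last p) = Fin.last (p + 1) := by
        rw [Fin.succAbove_of_le_castSucc, Fin.succ_last]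
        rw [Fin.le_def]
        simpa using Nat.lt_succ_iff.mp (Fin.val_lt_last hl)
      have := congrFun heq (Fin.last p)
      simpa [Function.comp, h1] using this

lemma bdry_apply_eq_zero (G : Dgraph V) {p : ℕ} (x : EPath V (p + 1) →₀ K)
    (g : EPath V p) (hg : ¬ IsAllowedPath G g)
    (hx : ∀ f ∈ x.support, IsAllowedPath G f ∧
      ¬ (f 0 = g 0 ∧ f (Fin.last (p + 1)) = g (Fin.last p))) :
    bdry K V p x g = 0 := by
  rw [bdry_apply]
  split
  · apply Finset.sum_eq_zero
    intro f hf
    have h0 := Dcoef_eq_zero (K := K) G (hx f hf).1 hg (hx f hf).2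
    simp [h0]
  · rfl

lemma filter_mem_Omega (G : Dgraph V) (p : ℕ) (a b : V) (ω : EPath V p →₀ K)
    (hω : ω ∈ Omega K V G p) :
    ω.filter (fun f => f 0 = a ∧ f (Fin.last p) = b) ∈ Omega K V G p := by
  classical
  cases p with
  | zero =>
    rw [Omega_zero, mem_allowedMod_iff] at hω ⊢
    intro f hf
    rw [Finsupp.support_filter, Finset.mem_filter] at hf
    exact hω f hf.1
  | succ p =>
    rw [Omega_succ, Submodule.mem_inf] at hω ⊢
    obtain ⟨hA, hB⟩ := hω
    rw [mem_allowedMod_iff] at hA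
    rw [Submodule.mem_comap, mem_allowedMod_iff] at hB
    set P : EPath V (p + 1) → Prop :=
      fun f => f 0 = a ∧ f (Fin.last (p + 1)) = b with hP
    constructor
    · rw [mem_allowedMod_iff]
      intro f hf
      rw [Finsupp.support_filter, Finset.mem_filter] at hf
      exact hA f hf.1
    · rw [Submodule.mem_comap, mem_allowedMod_iff]
      intro g hg
      by_contra hna
      have hval : bdry K V p (ω.filter P) g ≠ 0 := Finsupp.mem_support_iff.mp hg
      by_cases hend : a = g 0 ∧ b = g (Fin.last p)
      · have h1 : bdry K V p (ω.filter fun f => ¬ P f) g = 0 := by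
          apply bdry_apply_eq_zero G _ _ hna
          intro f hf
          rw [Finsupp.support_filter, Finset.mem_filter] at hf
          refine ⟨hA f hf.1, fun hc => hf.2 ⟨?_, ?_⟩⟩
          · rw [hc.1, ← hend.1]
          · rw [hc.2, ← hend.2]
        have h2 : bdry K V p ω g = 0 := by
          by_contra h2
          exact hna (hB g (Finsupp.mem_support_iff.mpr h2))
        have h3 : ω = ω.filter P + ω.filter fun f => ¬ P f :=
          (Finsupp.filter_pos_add_filter_neg ω P).symm
        apply hval
        have h4 : bdry K V p ω g
            = bdry K V p (ω.filter P) g + bdry K V p (ω.filter fun f => ¬ P f) g := by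
          conv_lhs => rw [h3]
          rw [map_add, Finsupp.add_apply]
        rw [h2, h1, add_zero] at h4
        exact h4.symm
      · apply hval
        apply bdry_apply_eq_zero G _ _ hna
        intro f hf
        rw [Finsupp.support_filter, Finset.mem_filter] at hf
        refine ⟨hA f hf.1, fun hc => hend ⟨?_, ?_⟩⟩
        · rw [← hc.1, hf.2.1]
        · rw [← hc.2, hf.2.2]

lemma isMinimal_cluster (G : Dgraph V) (p : ℕ) (ω : EPath V p →₀ K)
    (h : IsMinimal K G p ω) : ∃ a b : V, IsCluster a b ω := by
  classical
  obtain ⟨hΩ, hne, hmin⟩ := h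
  obtain ⟨f0, hf0⟩ := Finsupp.support_nonempty_iff.mpr hne
  refine ⟨f0 0, f0 (Fin.last p), ?_⟩
  set P : EPath V p → Prop :=
    fun f => f 0 = f0 0 ∧ f (Fin.last p) = f0 (Fin.last p) with hP
  have hmem := filter_mem_Omega G p (f0 0) (f0 (Fin.last p)) ω hΩ
  have hfilt : f0 ∈ (ω.filter P).support := by
    rw [Finsupp.support_filter, Finset.mem_filter]
    exact ⟨hf0, rfl, rfl⟩
  have hne' : ω.filter P ≠ 0 := by
    intro h0
    rw [h0] at hfilt
    simp at hfilt
  have hsub : (ω.filter P).support ⊆ ω.support := by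
    rw [Finsupp.support_filter]
    exact Finset.filter_subset _ _
  have hnot := hmin _ hmem hne'
  have heq : (ω.filter P).support = ω.support := by
    by_contra hne2
    exact hnot (Finset.ssubset_iff_subset_ne.mpr ⟨hsub, hne2⟩)
  intro f hf
  have hf' : f ∈ (ω.filter P).support := heq ▸ hf
  rw [Finsupp.support_filter, Finset.mem_filter] at hf'
  exact hf'.2

lemma mem_span_min {α : Type*} (W : Submodule K (α →₀ K)) :
    ∀ n : ℕ, ∀ w : α →₀ K, w ∈ W → w.support.card ≤ n →
      w ∈ Submodule.span K {w : α →₀ K | w ∈ W ∧ w ≠ 0 ∧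
        ∀ w' : α →₀ K, w' ∈ W → w' ≠ 0 → ¬ (w'.support ⊂ w.support)} := by
  classical
  intro n
  induction n with
  | zero =>
    intro w _ hc
    have h0 : w = 0 := by
      rw [← Finsupp.support_eq_empty]
      exact Finset.card_eq_zero.mp (Nat.le_zero.mp hc)
    rw [h0]
    exact Submodule.zero_mem _
  | succ n ih =>
    intro w hw hc
    by_cases h0 : w = 0
    · rw [h0]; exact Submodule.zero_mem _
    by_cases hmin : ∀ w' : α →₀ K, w' ∈ W → w' ≠ 0 → ¬ (w'.support ⊂ w.support)
    · exact Submodule.subset_span ⟨hw, h0, hmin⟩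
    push_neg at hmin
    obtain ⟨w', hw'W, hw'0, hss⟩ := hmin
    obtain ⟨f, hf⟩ := Finsupp.support_nonempty_iff.mpr hw'0
    have hw'f : w' f ≠ 0 := Finsupp.mem_support_iff.mp hf
    set c : K := w f / w' f with hcdef
    set u : α →₀ K := w - c • w' with hu
    have huW : u ∈ W := W.sub_mem hw (W.smul_mem _ hw'W)
    have hufz : u f = 0 := by
      simp only [hu, Finsupp.sub_apply, Finsupp.smul_apply, smul_eq_mul, hcdef]
      rw [div_mul_cancel₀ _ hw'f, sub_self]
    have husub : u.support ⊆ w.support.erase f := by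
      intro g hg
      have hgne : g ≠ f := fun hgf => (Finsupp.mem_support_iff.mp hg) (hgf ▸ hufz)
      refine Finset.mem_erase.mpr ⟨hgne, ?_⟩
      by_contra hgw
      have hwg : w g = 0 := Finsupp.notMem_support_iff.mp hgw
      have hw'g : w' g = 0 :=
        Finsupp.notMem_support_iff.mp (fun hh => hgw (hss.subset hh))
      apply Finsupp.mem_support_iff.mp hg
      simp [hu, hwg, hw'g]
    have hcard_u : u.support.card ≤ n := by
      have h1 : u.support.card ≤ (w.support.erase f).card := Finset.card_le_card husub
      have h2 : (w.support.erase f).card < w.support.card :=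
        Finset.card_erase_lt_of_mem (hss.subset hf)
      omega
    have hcard_w' : w'.support.card ≤ n := by
      have := Finset.card_lt_card hss
      omega
    have h1 := ih u huW hcard_u
    have h2 := ih w' hw'W hcard_w'
    have hsum : w = u + c • w' := by rw [hu]; abel
    rw [hsum]
    exact Submodule.add_mem _ h1 (Submodule.smul_mem _ _ h2)

lemma span_min_eq {α : Type*} (W : Submodule K (α →₀ K)) :
    Submodule.span K {w : α →₀ K | w ∈ W ∧ w ≠ 0 ∧
      ∀ w' : α →₀ K, w' ∈ W → w' ≠ 0 → ¬ (w'.support ⊂ w.support)} = W := by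
  apply le_antisymm
  · rw [Submodule.span_le]
    intro w hw
    exact hw.1
  · intro w hw
    exact mem_span_min W w.support.card w hw le_rfl

end Statement3Aux

theorem statement3 (K : Type*) [Field K] {V : Type*} (G : Dgraph V) (p : ℕ) :
    ∃ s : Set (EPath V p →₀ K),
      (∀ x ∈ s, IsMinimal K G p x ∧ ∃ a b : V, IsCluster a b x) ∧
      LinearIndependent K (Subtype.val : s → (EPath V p →₀ K)) ∧
      Submodule.span K s = Omega K V G p := by
  classical
  set M : Set (EPath V p →₀ K) := {w | w ∈ Omega K V G p ∧ w ≠ 0 ∧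
    ∀ w' : EPath V p →₀ K, w' ∈ Omega K V G p → w' ≠ 0 →
      ¬ (w'.support ⊂ w.support)} with hM
  obtain ⟨s, hsub, hspan, hli⟩ := exists_linearIndependent K M
  refine ⟨s, ?_, hli, ?_⟩
  · intro x hx
    have hxM := hsub hx
    have hmin : IsMinimal K G p x := ⟨hxM.1, hxM.2.1, hxM.2.2⟩
    exact ⟨hmin, isMinimal_cluster G p x hmin⟩
  · rw [hspan, hM, span_min_eq]
end

section
/- For every integer m ≥ 2, the space Ω₃(T_m) of ∂-invariant 3-paths of the trapezohedron T_m is the one-dimensional subspace spanned by the trapezohedral path τ_m; that is, Ω₃(T_m) = ⟨τ_m⟩ and τ_m ≠ 0. -/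
open scoped BigOperators
open Classical

lemma adj_cases {m : ℕ} (x y : TVert m) (h : TrapAdj m x y) :
    (x = .a ∧ ∃ k, y = .vi k) ∨ (∃ k l, x = .vi k ∧ y = .vj l ∧ (k = l ∨ k = finRot l)) ∨
      ((∃ k, x = .vj k) ∧ y = .b) := by
  cases x <;> cases y <;> simp_all [TrapAdj]

def Ppath (m : ℕ) (k : Fin m) : EPath (TVert m) 3 := ![.a, .vi k, .vj k, .b]
def Qpath (m : ℕ) (k : Fin m) : EPath (TVert m) 3 := ![.a, .vi (finRot k), .vj k, .b]

lemma allowed3 {m : ℕ} (f : EPath (TVert m) 3) (h : IsAllowedPath (Trap m) f) :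
    ∃ k, f = Ppath m k ∨ f = Qpath m k := by
  have h0 : TrapAdj m (f 0) (f 1) := h 0
  have h1 : TrapAdj m (f 1) (f 2) := h 1
  have h2 : TrapAdj m (f 2) (f 3) := h 2
  rcases adj_cases _ _ h1 with ⟨e1, _⟩ | ⟨k, l, e1, e2, hkl⟩ | ⟨⟨k, e1⟩, e2b⟩
  · rw [e1] at h0; rcases adj_cases _ _ h0 with ⟨_, _, e⟩ | ⟨_, _, _, e, _⟩ | ⟨_, e⟩ <;> simp at e
  · rw [e1] at h0
    rcases adj_cases _ _ h0 with ⟨e0, _⟩ | ⟨_, _, _, e, _⟩ | ⟨_, e⟩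
    · rw [e2] at h2
      rcases adj_cases _ _ h2 with ⟨e, _⟩ | ⟨_, _, e, _, _⟩ | ⟨_, e3⟩
      · simp at e
      · simp at e
      · refine ⟨l, ?_⟩
        rcases hkl with rfl | rfl
        · left; funext i; fin_cases i <;> simp_all [Ppath] <;> rfl
        · right; funext i; fin_cases i <;> simp_all [Qpath] <;> rfl
    · simp at e
    · simp at e
  · rw [e2b] at h2
    rcases adj_cases _ _ h2 with ⟨e, _⟩ | ⟨_, _, e, _, _⟩ | ⟨⟨_, e⟩, _⟩ <;> simp at e

lemma face0 {V : Type*} (f : EPath V 3) : f ∘ (0 : Fin 4).succAbove = ![f 1, f 2, f 3] := by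
  funext i; fin_cases i <;> rfl
lemma face1 {V : Type*} (f : EPath V 3) : f ∘ (1 : Fin 4).succAbove = ![f 0, f 2, f 3] := by
  funext i; fin_cases i <;> rfl
lemma face2 {V : Type*} (f : EPath V 3) : f ∘ (2 : Fin 4).succAbove = ![f 0, f 1, f 3] := by
  funext i; fin_cases i <;> rfl
lemma face3 {V : Type*} (f : EPath V 3) : f ∘ (3 : Fin 4).succAbove = ![f 0, f 1, f 2] := by
  funext i; fin_cases i <;> rfl

lemma regProj_single {K : Type*} [Field K] {V : Type*} {p : ℕ} (g : EPath V p) :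
    regProj K V p (Finsupp.single g 1) =
      if IsRegularPath g then Finsupp.single g 1 else 0 := by
  rw [regProj, Finsupp.linearCombination_single, one_smul]

lemma bdry2_single {K : Type*} [Field K] {V : Type*} (f : EPath V 3)
    (h0 : IsRegularPath ![f 1, f 2, f 3]) (h1 : IsRegularPath ![f 0, f 2, f 3])
    (h2 : IsRegularPath ![f 0, f 1, f 3]) (h3 : IsRegularPath ![f 0, f 1, f 2]) :
    bdry K V 2 (Finsupp.single f 1) =
      Finsupp.single ![f 1, f 2, f 3] 1 - Finsupp.single ![f 0, f 2, f 3] 1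
      + Finsupp.single ![f 0, f 1, f 3] 1 - Finsupp.single ![f 0, f 1, f 2] 1 := by
  rw [bdry, LinearMap.comp_apply]
  rw [show bdryFull K V 2 (Finsupp.single f 1) =
      ∑ q : Fin 4, ((-1 : K) ^ (q : ℕ)) • Finsupp.single (f ∘ q.succAbove) (1 : K) by
    rw [bdryFull, Finsupp.linearCombination_single, one_smul]]
  rw [map_sum, Fin.sum_univ_four]
  simp only [map_smul, face0, face1, face2, face3, regProj_single, if_pos h0, if_pos h1,
    if_pos h2, if_pos h3]
  norm_num [show ((0:Fin 4):ℕ)=0 from rfl, show ((1:Fin 4):ℕ)=1 from rfl,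
    show ((2:Fin 4):ℕ)=2 from rfl, show ((3:Fin 4):ℕ)=3 from rfl]
  abel

lemma reg3 {V : Type*} {x y z : V} (h1 : x ≠ y) (h2 : y ≠ z) : IsRegularPath ![x, y, z] := by
  intro i
  fin_cases i
  · simpa using h1
  · simpa using h2

lemma bdry2_single' {K : Type*} [Field K] {V : Type*} (w x y z : V)
    (hwx : w ≠ x) (hxy : x ≠ y) (hyz : y ≠ z) (hwy : w ≠ y) (hxz : x ≠ z) :
    bdry K V 2 (Finsupp.single ![w, x, y, z] 1) =
      Finsupp.single ![x, y, z] 1 - Finsupp.single ![w, y, z] 1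
      + Finsupp.single ![w, x, z] 1 - Finsupp.single ![w, x, y] 1 := by
  have := bdry2_single (K := K) ![w, x, y, z] (by simpa using reg3 hxy hyz)
    (by simpa using reg3 hwy hyz) (by simpa using reg3 hwx hxz) (by simpa using reg3 hwx hxy)
  simpa using this

lemma finRot_injective {m : ℕ} : Function.Injective (finRot (m := m)) := by
  intro k l h
  have h' : ((k : ℕ) + 1) % m = ((l : ℕ) + 1) % m := congrArg Fin.val h
  have hk := k.isLt
  have hl := l.isLt
  have ek : ((k : ℕ) + 1) % m = if (k : ℕ) + 1 = m then 0 else (k : ℕ) + 1 := by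
    rcases eq_or_ne ((k : ℕ) + 1) m with he | he
    · rw [if_pos he, he]; exact Nat.mod_self m
    · rw [if_neg he]; exact Nat.mod_eq_of_lt (by omega)
  have el : ((l : ℕ) + 1) % m = if (l : ℕ) + 1 = m then 0 else (l : ℕ) + 1 := by
    rcases eq_or_ne ((l : ℕ) + 1) m with he | he
    · rw [if_pos he, he]; exact Nat.mod_self m
    · rw [if_neg he]; exact Nat.mod_eq_of_lt (by omega)
  rw [ek, el] at h'
  apply Fin.ext
  split_ifs at h' <;> omega

lemma finRot_ne {m : ℕ} (hm : 2 ≤ m) (l : Fin m) : finRot l ≠ l := by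
  intro h
  have h' : ((l : ℕ) + 1) % m = l := congrArg Fin.val h
  have hl := l.isLt
  have el : ((l : ℕ) + 1) % m = if (l : ℕ) + 1 = m then 0 else (l : ℕ) + 1 := by
    rcases eq_or_ne ((l : ℕ) + 1) m with he | he
    · rw [if_pos he, he]; exact Nat.mod_self m
    · rw [if_neg he]; exact Nat.mod_eq_of_lt (by omega)
  rw [el] at h'
  split_ifs at h' <;> omega

lemma P_eq_P {m : ℕ} {k l : Fin m} : Ppath m k = Ppath m l ↔ k = l := by
  constructor
  · intro h
    have := congrFun h 1
    simpa [Ppath] using this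
  · rintro rfl; rfl

lemma Q_eq_Q {m : ℕ} {k l : Fin m} : Qpath m k = Qpath m l ↔ k = l := by
  constructor
  · intro h
    have := congrFun h 2
    simpa [Qpath] using this
  · rintro rfl; rfl

lemma P_ne_Q {m : ℕ} (hm : 2 ≤ m) (k l : Fin m) : Ppath m k ≠ Qpath m l := by
  intro h
  have h1 : TVert.vi k = TVert.vi (finRot l) := by simpa [Ppath, Qpath] using congrFun h 1
  have h2 : TVert.vj k = TVert.vj l := by simpa [Ppath, Qpath] using congrFun h 2
  simp only [TVert.vi.injEq, TVert.vj.injEq] at h1 h2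
  exact finRot_ne hm l (h1 ▸ h2 ▸ rfl)

lemma tau_apply {K : Type*} [Field K] {m : ℕ} (g : EPath (TVert m) 3) :
    tau K m g = ∑ k : Fin m,
      ((if Ppath m k = g then (1 : K) else 0) - (if Qpath m k = g then (1 : K) else 0)) := by
  rw [tau, Finsupp.finset_sum_apply]
  refine Finset.sum_congr rfl fun k _ => ?_
  rw [Finsupp.sub_apply, Finsupp.single_apply, Finsupp.single_apply]
  rfl

lemma tau_ne_zero {K : Type*} [Field K] {m : ℕ} (hm : 2 ≤ m) : tau K m ≠ 0 := by
  haveI : NeZero m := ⟨by omega⟩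
  intro h
  have h0 : tau K m (Ppath m 0) = 0 := by rw [h]; rfl
  rw [tau_apply] at h0
  have : ∀ k : Fin m, ((if Ppath m k = Ppath m 0 then (1 : K) else 0)
      - (if Qpath m k = Ppath m 0 then (1 : K) else 0)) = if k = 0 then 1 else 0 := by
    intro k
    rw [if_neg (Ne.symm (P_ne_Q hm 0 k))]
    simp [P_eq_P]
  rw [Finset.sum_congr rfl fun k _ => this k, Finset.sum_ite_eq' Finset.univ (0 : Fin m)] at h0
  simp at h0

lemma allowedMod_iff {K : Type*} [Field K] {V : Type*} {G : Dgraph V} {p : ℕ}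
    (ω : EPath V p →₀ K) :
    ω ∈ allowedMod K V G p ↔ ∀ f ∈ ω.support, IsAllowedPath G f := by
  have : allowedMod K V G p = Finsupp.supported K K {f : EPath V p | IsAllowedPath G f} := by
    rw [Finsupp.supported_eq_span_single, allowedMod]
    congr 1
    ext x
    simp [Set.mem_image, eq_comm, and_comm]
  rw [this, Finsupp.mem_supported]
  exact Iff.rfl

lemma single_mem_allowedMod {K : Type*} [Field K] {V : Type*} {G : Dgraph V} {p : ℕ}
    {f : EPath V p} (hf : IsAllowedPath G f) :
    Finsupp.single f (1 : K) ∈ allowedMod K V G p :=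
  Submodule.subset_span ⟨f, hf, rfl⟩

lemma Omega3_eq (K : Type*) [Field K] (V : Type*) (G : Dgraph V) :
    Omega K V G 3 = allowedMod K V G 3 ⊓ (allowedMod K V G 2).comap (bdry K V 2) := rfl

lemma allowed_P {m : ℕ} (k : Fin m) : IsAllowedPath (Trap m) (Ppath m k) := by
  intro i
  fin_cases i
  · exact trivial
  · exact Or.inl rfl
  · exact trivial

lemma allowed_Q {m : ℕ} (k : Fin m) : IsAllowedPath (Trap m) (Qpath m k) := by
  intro i
  fin_cases i
  · exact trivial
  · exact Or.inr rfl
  · exact trivial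

lemma bdryP {K : Type*} [Field K] {m : ℕ} (k : Fin m) :
    bdry K (TVert m) 2 (Finsupp.single (Ppath m k) 1) =
      Finsupp.single ![.vi k, .vj k, .b] 1 - Finsupp.single ![.a, .vj k, .b] 1
      + Finsupp.single ![.a, .vi k, .b] 1 - Finsupp.single ![.a, .vi k, .vj k] 1 :=
  bdry2_single' _ _ _ _ (by simp) (by simp) (by simp) (by simp) (by simp)

lemma bdryQ {K : Type*} [Field K] {m : ℕ} (k : Fin m) :
    bdry K (TVert m) 2 (Finsupp.single (Qpath m k) 1) =
      Finsupp.single ![.vi (finRot k), .vj k, .b] 1 - Finsupp.single ![.a, .vj k, .b] 1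
      + Finsupp.single ![.a, .vi (finRot k), .b] 1
      - Finsupp.single ![.a, .vi (finRot k), .vj k] 1 :=
  bdry2_single' _ _ _ _ (by simp) (by simp) (by simp) (by simp) (by simp)

lemma vec3_eq {V : Type*} {x y z x' y' z' : V} :
    (![x, y, z] : EPath V 2) = ![x', y', z'] ↔ x = x' ∧ y = y' ∧ z = z' := by
  constructor
  · intro h; exact ⟨congrFun h 0, congrFun h 1, congrFun h 2⟩
  · rintro ⟨rfl, rfl, rfl⟩; rfl

lemma allowed2_ijb {m : ℕ} (k l : Fin m) (h : TrapAdj m (.vi k) (.vj l)) :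
    IsAllowedPath (Trap m) ![.vi k, .vj l, .b] := by
  intro i
  fin_cases i
  · exact h
  · exact trivial

lemma allowed2_aij {m : ℕ} (k l : Fin m) (h : TrapAdj m (.vi k) (.vj l)) :
    IsAllowedPath (Trap m) ![.a, .vi k, .vj l] := by
  intro i
  fin_cases i
  · exact trivial
  · exact h

lemma sum_rot {m : ℕ} {M : Type*} [AddCommMonoid M] (g : Fin m → M) :
    ∑ k : Fin m, g (finRot k) = ∑ k : Fin m, g k :=
  Fintype.sum_bijective finRot (Finite.injective_iff_bijective.mp finRot_injective)
    _ _ (fun _ => rfl)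

lemma bdry_tau {K : Type*} [Field K] {m : ℕ} :
    bdry K (TVert m) 2 (tau K m) =
      ∑ k : Fin m, (Finsupp.single ![.vi k, .vj k, .b] (1 : K)
        - Finsupp.single ![.vi (finRot k), .vj k, .b] 1
        - Finsupp.single ![.a, .vi k, .vj k] 1
        + Finsupp.single ![.a, .vi (finRot k), .vj k] 1
        + (Finsupp.single ![.a, .vi k, .b] 1 - Finsupp.single ![.a, .vi (finRot k), .b] 1)) := by
  rw [tau, map_sum]
  refine Finset.sum_congr rfl fun k _ => ?_
  rw [map_sub,
    show (Finsupp.single ![TVert.a, TVert.vi k, TVert.vj k, TVert.b] (1 : K))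
      = Finsupp.single (Ppath m k) 1 from rfl,
    show (Finsupp.single ![TVert.a, TVert.vi (finRot k), TVert.vj k, TVert.b] (1 : K))
      = Finsupp.single (Qpath m k) 1 from rfl, bdryP, bdryQ]
  abel

lemma tau_mem_Omega {K : Type*} [Field K] {m : ℕ} : tau K m ∈ Omega K (TVert m) (Trap m) 3 := by
  rw [Omega3_eq]
  constructor
  · rw [tau]
    exact Submodule.sum_mem _ fun k _ => Submodule.sub_mem _
      (single_mem_allowedMod (allowed_P k)) (single_mem_allowedMod (allowed_Q k))
  · show bdry K (TVert m) 2 (tau K m) ∈ allowedMod K (TVert m) (Trap m) 2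
    rw [bdry_tau, Finset.sum_add_distrib]
    apply Submodule.add_mem
    · refine Submodule.sum_mem _ fun k _ => ?_
      refine Submodule.add_mem _ (Submodule.sub_mem _ (Submodule.sub_mem _ ?_ ?_) ?_) ?_ <;>
        apply single_mem_allowedMod
      · exact allowed2_ijb k k (Or.inl rfl)
      · exact allowed2_ijb (finRot k) k (Or.inr rfl)
      · exact allowed2_aij k k (Or.inl rfl)
      · exact allowed2_aij (finRot k) k (Or.inr rfl)
    · rw [Finset.sum_sub_distrib,
        show (∑ x : Fin m, (Finsupp.single ![TVert.a, TVert.vi (finRot x), TVert.b] (1 : K)))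
          = ∑ x : Fin m, Finsupp.single ![TVert.a, TVert.vi x, TVert.b] (1 : K) from
          sum_rot (fun j => Finsupp.single ![TVert.a, TVert.vi j, TVert.b] (1 : K)), sub_self]
      exact Submodule.zero_mem _

lemma omega_eq_smul_tau {K : Type*} [Field K] {m : ℕ} (hm : 2 ≤ m)
    (ω : EPath (TVert m) 3 →₀ K) (hω : ω ∈ Omega K (TVert m) (Trap m) 3) :
    ω = ω (Ppath m ⟨0, by omega⟩) • tau K m := by
  haveI : NeZero m := ⟨by omega⟩
  rw [Omega3_eq] at hω
  obtain ⟨hA, hB⟩ := hω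
  have hsupp := (allowedMod_iff ω).1 hA
  -- decomposition of ω
  have hdec : ω = ∑ k : Fin m, (ω (Ppath m k) • Finsupp.single (Ppath m k) (1 : K)
      + ω (Qpath m k) • Finsupp.single (Qpath m k) (1 : K)) := by
    ext g
    rw [Finsupp.finset_sum_apply]
    by_cases hg : ∃ l, g = Ppath m l ∨ g = Qpath m l
    · obtain ⟨l, rfl | rfl⟩ := hg
      · have hterm : ∀ k : Fin m, ((ω (Ppath m k) • Finsupp.single (Ppath m k) (1 : K)
            + ω (Qpath m k) • Finsupp.single (Qpath m k) (1 : K)) :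
              EPath (TVert m) 3 →₀ K) (Ppath m l)
            = if k = l then ω (Ppath m l) else 0 := by
          intro k
          have hne : Qpath m k ≠ Ppath m l := Ne.symm (P_ne_Q hm l k)
          by_cases hkl : k = l
          · subst hkl; simp [Finsupp.single_apply, hne]
          · have hne2 : Ppath m k ≠ Ppath m l := fun h => hkl (P_eq_P.mp h)
            simp [Finsupp.single_apply, hne, hne2, hkl]
        rw [Finset.sum_congr rfl fun k _ => hterm k,
          Finset.sum_ite_eq' Finset.univ l fun _ => ω (Ppath m l)]
        simp
      · have hterm : ∀ k : Fin m, ((ω (Ppath m k) • Finsupp.single (Ppath m k) (1 : K)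
            + ω (Qpath m k) • Finsupp.single (Qpath m k) (1 : K)) :
              EPath (TVert m) 3 →₀ K) (Qpath m l)
            = if k = l then ω (Qpath m l) else 0 := by
          intro k
          have hne : Ppath m k ≠ Qpath m l := P_ne_Q hm k l
          by_cases hkl : k = l
          · subst hkl; simp [Finsupp.single_apply, hne]
          · have hne2 : Qpath m k ≠ Qpath m l := fun h => hkl (Q_eq_Q.mp h)
            simp [Finsupp.single_apply, hne, hne2, hkl]
        rw [Finset.sum_congr rfl fun k _ => hterm k,
          Finset.sum_ite_eq' Finset.univ l fun _ => ω (Qpath m l)]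
        simp
    · push_neg at hg
      have h0 : ω g = 0 := by
        by_contra h
        obtain ⟨l, hl | hl⟩ := allowed3 g (hsupp g (Finsupp.mem_support_iff.2 h))
        · exact (hg l).1 hl
        · exact (hg l).2 hl
      rw [h0]
      symm
      apply Finset.sum_eq_zero
      intro k _
      simp [Finsupp.single_apply, Ne.symm (hg k).1, Ne.symm (hg k).2]
  -- boundary of ω
  have hbd : bdry K (TVert m) 2 ω = ∑ k : Fin m,
      (ω (Ppath m k) • (Finsupp.single ![TVert.vi k, TVert.vj k, TVert.b] (1 : K)
          - Finsupp.single ![TVert.a, TVert.vj k, TVert.b] 1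
          + Finsupp.single ![TVert.a, TVert.vi k, TVert.b] 1
          - Finsupp.single ![TVert.a, TVert.vi k, TVert.vj k] 1)
        + ω (Qpath m k) • (Finsupp.single ![TVert.vi (finRot k), TVert.vj k, TVert.b] (1 : K)
          - Finsupp.single ![TVert.a, TVert.vj k, TVert.b] 1
          + Finsupp.single ![TVert.a, TVert.vi (finRot k), TVert.b] 1
          - Finsupp.single ![TVert.a, TVert.vi (finRot k), TVert.vj k] 1)) := by
    conv_lhs => rw [hdec]
    rw [map_sum]
    refine Finset.sum_congr rfl fun k _ => ?_
    rw [map_add, map_smul, map_smul, bdryP, bdryQ]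
  have hBsupp := (allowedMod_iff _).1 hB
  -- first relation: ω (Q l) = -ω (P l)
  have hz1 : ∀ l : Fin m, ω (Qpath m l) = -ω (Ppath m l) := by
    intro l
    have hz : (bdry K (TVert m) 2 ω) ![TVert.a, TVert.vj l, TVert.b] = 0 := by
      by_contra h
      exact (hBsupp _ (Finsupp.mem_support_iff.2 h)) 0
    rw [hbd, Finsupp.finset_sum_apply] at hz
    have hterm : ∀ k : Fin m,
        ((ω (Ppath m k) • (Finsupp.single ![TVert.vi k, TVert.vj k, TVert.b] (1 : K)
          - Finsupp.single ![TVert.a, TVert.vj k, TVert.b] 1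
          + Finsupp.single ![TVert.a, TVert.vi k, TVert.b] 1
          - Finsupp.single ![TVert.a, TVert.vi k, TVert.vj k] 1)
        + ω (Qpath m k) • (Finsupp.single ![TVert.vi (finRot k), TVert.vj k, TVert.b] (1 : K)
          - Finsupp.single ![TVert.a, TVert.vj k, TVert.b] 1
          + Finsupp.single ![TVert.a, TVert.vi (finRot k), TVert.b] 1
          - Finsupp.single ![TVert.a, TVert.vi (finRot k), TVert.vj k] 1)) :
            EPath (TVert m) 2 →₀ K) ![TVert.a, TVert.vj l, TVert.b]
        = if k = l then -(ω (Ppath m l) + ω (Qpath m l)) else 0 := by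
      intro k
      by_cases hkl : k = l
      · subst hkl
        simp [Finsupp.single_apply, funext_iff, Fin.forall_fin_succ, Matrix.cons_val_zero,
          Matrix.cons_val_succ]
        ring
      · simp [Finsupp.single_apply, funext_iff, Fin.forall_fin_succ, Matrix.cons_val_zero,
          Matrix.cons_val_succ, hkl]
    rw [Finset.sum_congr rfl fun k _ => hterm k,
      Finset.sum_ite_eq' Finset.univ l fun _ => -(ω (Ppath m l) + ω (Qpath m l))] at hz
    simp only [Finset.mem_univ, if_true] at hz
    linear_combination -hz
  -- second relation: ω (P (finRot k₀)) = -ω (Q k₀)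
  have hz2 : ∀ k0 : Fin m, ω (Ppath m (finRot k0)) + ω (Qpath m k0) = 0 := by
    intro k0
    have hz : (bdry K (TVert m) 2 ω) ![TVert.a, TVert.vi (finRot k0), TVert.b] = 0 := by
      by_contra h
      exact (hBsupp _ (Finsupp.mem_support_iff.2 h)) 1
    rw [hbd, Finsupp.finset_sum_apply] at hz
    have hterm : ∀ k : Fin m,
        ((ω (Ppath m k) • (Finsupp.single ![TVert.vi k, TVert.vj k, TVert.b] (1 : K)
          - Finsupp.single ![TVert.a, TVert.vj k, TVert.b] 1
          + Finsupp.single ![TVert.a, TVert.vi k, TVert.b] 1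
          - Finsupp.single ![TVert.a, TVert.vi k, TVert.vj k] 1)
        + ω (Qpath m k) • (Finsupp.single ![TVert.vi (finRot k), TVert.vj k, TVert.b] (1 : K)
          - Finsupp.single ![TVert.a, TVert.vj k, TVert.b] 1
          + Finsupp.single ![TVert.a, TVert.vi (finRot k), TVert.b] 1
          - Finsupp.single ![TVert.a, TVert.vi (finRot k), TVert.vj k] 1)) :
            EPath (TVert m) 2 →₀ K) ![TVert.a, TVert.vi (finRot k0), TVert.b]
        = (if k = finRot k0 then ω (Ppath m (finRot k0)) else 0)
          + (if k = k0 then ω (Qpath m k0) else 0) := by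
      intro k
      by_cases h1 : k = finRot k0
      · by_cases h2 : k = k0
        · exact absurd (h1.symm.trans h2) (finRot_ne hm k0)
        · subst h1
          simp [Finsupp.single_apply, funext_iff, Fin.forall_fin_succ, Matrix.cons_val_zero,
            Matrix.cons_val_succ, finRot_injective.eq_iff, finRot_ne hm k0]
      · by_cases h2 : k = k0
        · subst h2
          simp [Finsupp.single_apply, funext_iff, Fin.forall_fin_succ, Matrix.cons_val_zero,
            Matrix.cons_val_succ, finRot_injective.eq_iff, h1]
        · simp [Finsupp.single_apply, funext_iff, Fin.forall_fin_succ, Matrix.cons_val_zero,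
            Matrix.cons_val_succ, finRot_injective.eq_iff, h1, h2]
    rw [Finset.sum_congr rfl fun k _ => hterm k, Finset.sum_add_distrib,
      Finset.sum_ite_eq' Finset.univ (finRot k0) fun _ => ω (Ppath m (finRot k0)),
      Finset.sum_ite_eq' Finset.univ k0 fun _ => ω (Qpath m k0)] at hz
    simpa using hz
  have key : ∀ k : Fin m, ω (Ppath m (finRot k)) = ω (Ppath m k) := by
    intro k
    linear_combination hz2 k - hz1 k
  have hconst : ∀ l : Fin m, ω (Ppath m l) = ω (Ppath m ⟨0, by omega⟩) := by
    have step : ∀ n (h : n < m), ω (Ppath m ⟨n, h⟩) = ω (Ppath m ⟨0, by omega⟩) := by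
      intro n
      induction n with
      | zero => intro h; rfl
      | succ n ih =>
        intro h
        have hn : n < m := Nat.lt_of_succ_lt h
        have e : (⟨n + 1, h⟩ : Fin m) = finRot ⟨n, hn⟩ := by
          apply Fin.ext
          show (n + 1 : ℕ) = (n + 1) % m
          exact (Nat.mod_eq_of_lt h).symm
        rw [e, key ⟨n, hn⟩, ih hn]
    intro l
    exact step l.1 l.2
  conv_lhs => rw [hdec]
  rw [tau, Finset.smul_sum]
  refine Finset.sum_congr rfl fun k _ => ?_
  rw [show Finsupp.single ![TVert.a, TVert.vi k, TVert.vj k, TVert.b] (1 : K)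
        = Finsupp.single (Ppath m k) 1 from rfl,
    show Finsupp.single ![TVert.a, TVert.vi (finRot k), TVert.vj k, TVert.b] (1 : K)
        = Finsupp.single (Qpath m k) 1 from rfl,
    hz1 k, hconst k, smul_sub, neg_smul]
  abel

theorem statement4 (K : Type*) [Field K] (m : ℕ) (hm : 2 ≤ m) :
    Omega K (TVert m) (Trap m) 3 = Submodule.span K {tau K m} ∧ tau K m ≠ 0 := by
  refine ⟨le_antisymm ?_ ?_, tau_ne_zero hm⟩
  · intro ω hω
    rw [omega_eq_smul_tau hm ω hω]
    exact Submodule.smul_mem _ _ (Submodule.mem_span_singleton_self _)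
  · rw [Submodule.span_le, Set.singleton_subset_iff]
    exact tau_mem_Omega
end

section
/- Let G be a digraph. Then Ω₃(G) admits a K-basis every element of which is of the form f_*(τ_m) for some integer m ≥ 2 and some digraph map f : T_m → G. -/
open scoped BigOperators
open Classical

namespace Statement11Proof

open Finsupp

variable {K : Type*} [Field K] {V W : Type*}

def pth (v0 v1 v2 v3 : V) : EPath V 3 := ![v0, v1, v2, v3]

lemma pth_zero (v0 v1 v2 v3 : V) : pth v0 v1 v2 v3 0 = v0 := rfl
lemma pth_one (v0 v1 v2 v3 : V) : pth v0 v1 v2 v3 1 = v1 := rfl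
lemma pth_two (v0 v1 v2 v3 : V) : pth v0 v1 v2 v3 2 = v2 := rfl
lemma pth_three (v0 v1 v2 v3 : V) : pth v0 v1 v2 v3 3 = v3 := rfl

lemma epath3_eq (h : EPath V 3) : h = pth (h 0) (h 1) (h 2) (h 3) := by
  funext i; fin_cases i <;> rfl

lemma pth_inj {v0 v1 v2 v3 w0 w1 w2 w3 : V} (h : pth v0 v1 v2 v3 = pth w0 w1 w2 w3) :
    v0 = w0 ∧ v1 = w1 ∧ v2 = w2 ∧ v3 = w3 :=
  ⟨congrFun h 0, congrFun h 1, congrFun h 2, congrFun h 3⟩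

lemma reg3_iff (u v w : V) : IsRegularPath ![u, v, w] ↔ u ≠ v ∧ v ≠ w := by
  constructor
  · intro h; exact ⟨h 0, h 1⟩
  · rintro ⟨h1, h2⟩ k; fin_cases k
    · exact h1
    · exact h2

lemma reg4_iff (v0 v1 v2 v3 : V) :
    IsRegularPath (pth v0 v1 v2 v3) ↔ v0 ≠ v1 ∧ v1 ≠ v2 ∧ v2 ≠ v3 := by
  constructor
  · intro h; exact ⟨h 0, h 1, h 2⟩
  · rintro ⟨h1, h2, h3⟩ k; fin_cases k
    · exact h1
    · exact h2
    · exact h3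

lemma allowed3_iff (G : Dgraph V) (u v w : V) :
    IsAllowedPath G ![u, v, w] ↔ G.Adj u v ∧ G.Adj v w := by
  constructor
  · intro h; exact ⟨h 0, h 1⟩
  · rintro ⟨h1, h2⟩ k; fin_cases k
    · exact h1
    · exact h2

lemma allowed4_iff (G : Dgraph V) (v0 v1 v2 v3 : V) :
    IsAllowedPath G (pth v0 v1 v2 v3) ↔ G.Adj v0 v1 ∧ G.Adj v1 v2 ∧ G.Adj v2 v3 := by
  constructor
  · intro h; exact ⟨h 0, h 1, h 2⟩
  · rintro ⟨h1, h2, h3⟩ k; fin_cases k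
    · exact h1
    · exact h2
    · exact h3

lemma allowed_regular {G : Dgraph V} {p : ℕ} {f : EPath V p} (h : IsAllowedPath G f) :
    IsRegularPath f := fun k e => G.loopless _ (e ▸ h k)

lemma regProj_single (p : ℕ) (f : EPath V p) (c : K) :
    regProj K V p (Finsupp.single f c) =
      if IsRegularPath f then Finsupp.single f c else 0 := by
  have : Finsupp.single f c = c • Finsupp.single f (1 : K) := by
    rw [Finsupp.smul_single, smul_eq_mul, mul_one]
  rw [this, map_smul, regProj, Finsupp.linearCombination_single]
  split_ifs <;> simp [Finsupp.smul_single, smul_eq_mul, mul_one]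

lemma regProj_apply {p : ℕ} (u : EPath V p →₀ K) (g : EPath V p) :
    regProj K V p u g = if IsRegularPath g then u g else 0 := by
  rw [regProj, Finsupp.linearCombination_apply, Finsupp.sum_apply]
  rw [Finsupp.sum]
  rw [Finset.sum_eq_single g]
  · by_cases hg : g ∈ u.support
    · split_ifs with h <;> simp [Finsupp.single_apply, h]
    · have : u g = 0 := Finsupp.notMem_support_iff.mp hg
      simp [this]
  · intro f _ hfg
    split_ifs with h <;> simp [Finsupp.single_apply, hfg]
  · intro hg
    have : u g = 0 := Finsupp.notMem_support_iff.mp hg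
    simp [this]

lemma bdryFull_single (p : ℕ) (f : EPath V (p + 1)) (c : K) :
    bdryFull K V p (Finsupp.single f c) =
      c • ∑ q : Fin (p + 2), ((-1 : K) ^ (q : ℕ)) • Finsupp.single (f ∘ q.succAbove) (1 : K) := by
  have : Finsupp.single f c = c • Finsupp.single f (1 : K) := by
    rw [Finsupp.smul_single, smul_eq_mul, mul_one]
  rw [this, map_smul, bdryFull, Finsupp.linearCombination_single, one_smul]

lemma inducedMap_single (φ : V → W) (p : ℕ) (f : EPath V p) (c : K) :
    inducedMap K φ p (Finsupp.single f c) =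
      if IsRegularPath (φ ∘ f) then Finsupp.single (φ ∘ f) c else 0 := by
  rw [inducedMap, LinearMap.comp_apply, Finsupp.lmapDomain_apply, Finsupp.mapDomain_single,
    regProj_single]

def suppAllowed (G : Dgraph V) (p : ℕ) : Submodule K (EPath V p →₀ K) where
  carrier := {ω | ∀ f ∈ ω.support, IsAllowedPath G f}
  add_mem' := by
    intro x y hx hy f hf
    rcases Finset.mem_union.mp (Finsupp.support_add hf) with h | h
    exacts [hx f h, hy f h]
  zero_mem' := by intro f hf; simp at hf
  smul_mem' := by
    intro c x hx f hf
    exact hx f (Finsupp.support_smul hf)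

lemma mem_allowedMod_iff {G : Dgraph V} {p : ℕ} {ω : EPath V p →₀ K} :
    ω ∈ allowedMod K V G p ↔ ∀ f ∈ ω.support, IsAllowedPath G f := by
  constructor
  · intro h
    have hle : allowedMod K V G p ≤ suppAllowed G p := by
      rw [allowedMod, Submodule.span_le]
      rintro x ⟨f, hf, rfl⟩ g hg
      have := Finsupp.support_single_subset hg
      simp only [Finset.mem_singleton] at this
      subst this; exact hf
    exact hle h
  · intro h
    rw [← Finsupp.sum_single ω]
    refine Submodule.sum_mem _ ?_
    intro f hf
    have h1 : Finsupp.single f (ω f) = (ω f) • Finsupp.single f (1 : K) := by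
      rw [Finsupp.smul_single, smul_eq_mul, mul_one]
    rw [h1]
    exact Submodule.smul_mem _ _ (Submodule.subset_span ⟨f, h f hf, rfl⟩)

end Statement11Proof
namespace Statement11Proof

variable {K : Type*} [Field K] {V W : Type*}

lemma comp_cons (φ : V → W) (u v w : V) : φ ∘ ![u, v, w] = ![φ u, φ v, φ w] := by
  funext i; fin_cases i <;> rfl

lemma comp_pth (φ : V → W) (v0 v1 v2 v3 : V) :
    φ ∘ pth v0 v1 v2 v3 = pth (φ v0) (φ v1) (φ v2) (φ v3) := by
  funext i; fin_cases i <;> rfl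

lemma face0 (f : EPath V 3) : f ∘ (0 : Fin 4).succAbove = ![f 1, f 2, f 3] := by
  funext i; fin_cases i <;> rfl
lemma face1 (f : EPath V 3) : f ∘ (1 : Fin 4).succAbove = ![f 0, f 2, f 3] := by
  funext i; fin_cases i <;> rfl
lemma face2 (f : EPath V 3) : f ∘ (2 : Fin 4).succAbove = ![f 0, f 1, f 3] := by
  funext i; fin_cases i <;> rfl
lemma face3 (f : EPath V 3) : f ∘ (3 : Fin 4).succAbove = ![f 0, f 1, f 2] := by
  funext i; fin_cases i <;> rfl

lemma bdryFull3_single (f : EPath V 3) (c : K) :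
    bdryFull K V 2 (Finsupp.single f c) =
      c • (Finsupp.single ![f 1, f 2, f 3] (1 : K) - Finsupp.single ![f 0, f 2, f 3] 1
        + Finsupp.single ![f 0, f 1, f 3] 1 - Finsupp.single ![f 0, f 1, f 2] 1) := by
  rw [bdryFull_single, Fin.sum_univ_four, face0, face1, face2, face3]
  have v0 : (((0:Fin 4)) : ℕ) = 0 := rfl
  have v1 : (((1:Fin 4)) : ℕ) = 1 := rfl
  have v2 : (((2:Fin 4)) : ℕ) = 2 := rfl
  have v3 : (((3:Fin 4)) : ℕ) = 3 := rfl
  rw [v0, v1, v2, v3]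
  have e0 : ((-1 : K) ^ (0:ℕ)) = 1 := by norm_num
  have e1 : ((-1 : K) ^ (1:ℕ)) = -1 := by norm_num
  have e2 : ((-1 : K) ^ (2:ℕ)) = 1 := by norm_num
  have e3 : ((-1 : K) ^ (3:ℕ)) = -1 := by norm_num
  rw [e0, e1, e2, e3, one_smul, one_smul, neg_one_smul, neg_one_smul]
  congr 1
  abel

lemma bdry3_single (f : EPath V 3) (c : K) :
    bdry K V 2 (Finsupp.single f c) =
      c • ((if IsRegularPath ![f 1, f 2, f 3] then Finsupp.single ![f 1, f 2, f 3] (1:K) else 0)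
        - (if IsRegularPath ![f 0, f 2, f 3] then Finsupp.single ![f 0, f 2, f 3] 1 else 0)
        + (if IsRegularPath ![f 0, f 1, f 3] then Finsupp.single ![f 0, f 1, f 3] 1 else 0)
        - (if IsRegularPath ![f 0, f 1, f 2] then Finsupp.single ![f 0, f 1, f 2] 1 else 0)) := by
  rw [bdry, LinearMap.comp_apply, bdryFull3_single, map_smul, map_sub, map_add, map_sub,
    regProj_single, regProj_single, regProj_single, regProj_single]

lemma bdry_kill {h : EPath V 3} (hirr : ¬ IsRegularPath h) (c : K) :
    bdry K V 2 (Finsupp.single h c) = 0 := by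
  rw [IsRegularPath] at hirr
  push_neg at hirr
  obtain ⟨j, hj⟩ := hirr
  rw [bdry3_single]
  fin_cases j
  · -- h 0 = h 1
    simp only [Fin.castSucc, Fin.succ] at hj
    have h01 : h 0 = h 1 := hj
    have e1 : (![h 0, h 2, h 3] : EPath V 2) = ![h 1, h 2, h 3] := by rw [h01]
    have r2 : ¬ IsRegularPath ![h 0, h 1, h 3] := by
      rw [reg3_iff]; push_neg; intro hc; exact absurd h01 hc
    have r3 : ¬ IsRegularPath ![h 0, h 1, h 2] := by
      rw [reg3_iff]; push_neg; intro hc; exact absurd h01 hc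
    rw [e1, if_neg r2, if_neg r3]
    simp
  · -- h 1 = h 2
    simp only [Fin.castSucc, Fin.succ] at hj
    have h12 : h 1 = h 2 := hj
    have e1 : (![h 0, h 1, h 3] : EPath V 2) = ![h 0, h 2, h 3] := by rw [h12]
    have r0 : ¬ IsRegularPath ![h 1, h 2, h 3] := by
      rw [reg3_iff]; push_neg; intro hc; exact absurd h12 hc
    have r3 : ¬ IsRegularPath ![h 0, h 1, h 2] := by
      rw [reg3_iff]; push_neg; intro _; exact h12
    rw [e1, if_neg r0, if_neg r3]
    simp
  · -- h 2 = h 3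
    simp only [Fin.castSucc, Fin.succ] at hj
    have h23 : h 2 = h 3 := hj
    have e1 : (![h 0, h 1, h 2] : EPath V 2) = ![h 0, h 1, h 3] := by rw [h23]
    have r0 : ¬ IsRegularPath ![h 1, h 2, h 3] := by
      rw [reg3_iff]; push_neg; intro _; exact h23
    have r1 : ¬ IsRegularPath ![h 0, h 2, h 3] := by
      rw [reg3_iff]; push_neg; intro _; exact h23
    rw [e1, if_neg r0, if_neg r1]
    simp
  
lemma comp_irreg {p : ℕ} (φ : V → W) {f : EPath V p} (h : ¬ IsRegularPath f) :
    ¬ IsRegularPath (φ ∘ f) := by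
  rw [IsRegularPath] at h ⊢
  push_neg at h ⊢
  obtain ⟨j, hj⟩ := h
  exact ⟨j, by simp [Function.comp, hj]⟩

lemma inducedMap_ifsingle (φ : V → W) {p : ℕ} (g : EPath V p) :
    inducedMap K φ p (if IsRegularPath g then Finsupp.single g (1:K) else 0) =
      if IsRegularPath (φ ∘ g) then Finsupp.single (φ ∘ g) (1:K) else 0 := by
  by_cases h1 : IsRegularPath g
  · rw [if_pos h1, inducedMap_single]
  · rw [if_neg h1, map_zero, if_neg (comp_irreg φ h1)]

lemma chain (φ : V → W) (u : EPath V 3 →₀ K) :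
    bdry K W 2 (inducedMap K φ 3 u) = inducedMap K φ 2 (bdry K V 2 u) := by
  have : (bdry K W 2).comp (inducedMap K φ 3) = (inducedMap K φ 2).comp (bdry K V 2) := by
    apply Finsupp.lhom_ext
    intro f c
    simp only [LinearMap.comp_apply]
    have lhs : bdry K W 2 (inducedMap K φ 3 (Finsupp.single f c))
        = bdry K W 2 (Finsupp.single (φ ∘ f) c) := by
      rw [inducedMap_single]
      split_ifs with h
      · rfl
      · rw [map_zero, bdry_kill h]
    rw [lhs, bdry3_single, bdry3_single, map_smul, map_sub, map_add, map_sub,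
      inducedMap_ifsingle, inducedMap_ifsingle, inducedMap_ifsingle, inducedMap_ifsingle,
      comp_cons, comp_cons, comp_cons, comp_cons]
    rfl
  exact LinearMap.congr_fun this u

lemma inducedMap_allowed {X : Dgraph V} {Y : Dgraph W} (f : DgraphMap X Y) {p : ℕ}
    {u : EPath V p →₀ K} (hu : u ∈ allowedMod K V X p) :
    inducedMap K f.toFun p u ∈ allowedMod K W Y p := by
  induction hu using Submodule.span_induction with
  | mem x hx =>
    obtain ⟨g, hg, rfl⟩ := hx
    rw [inducedMap_single]
    split_ifs with h
    · exact Submodule.subset_span ⟨f.toFun ∘ g, fun k => by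
        rcases f.map_adj (hg k) with h' | h'
        · exact h'
        · exact absurd h' (h k), rfl⟩
    · exact Submodule.zero_mem _
  | zero => rw [map_zero]; exact Submodule.zero_mem _
  | add x y _ _ hx hy => rw [map_add]; exact Submodule.add_mem _ hx hy
  | smul c x _ hx => rw [map_smul]; exact Submodule.smul_mem _ _ hx

end Statement11Proof
namespace Statement11Proof

variable {K : Type*} [Field K] {V W : Type*}

lemma finRot_injective {m : ℕ} : Function.Injective (finRot (m := m)) := by
  intro i j h
  have h' : ((i : ℕ) + 1) % m = ((j : ℕ) + 1) % m := congrArg Fin.val h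
  have key : ∀ x : ℕ, x < m → (x + 1) % m = if x + 1 = m then 0 else x + 1 := by
    intro x hx
    split_ifs with h1
    · rw [h1, Nat.mod_self]
    · exact Nat.mod_eq_of_lt (by omega)
  rw [key _ i.isLt, key _ j.isLt] at h'
  have hi := i.isLt
  have hj := j.isLt
  apply Fin.ext
  split_ifs at h' <;> omega

lemma finRot_bijective {m : ℕ} : Function.Bijective (finRot (m := m)) :=
  Finite.injective_iff_bijective.mp finRot_injective

lemma trap_adj_a_vi {m : ℕ} (k : Fin m) : (Trap m).Adj TVert.a (TVert.vi k) := trivial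
lemma trap_adj_vj_b {m : ℕ} (k : Fin m) : (Trap m).Adj (TVert.vj k) TVert.b := trivial
lemma trap_adj_vi_vj {m : ℕ} (k : Fin m) : (Trap m).Adj (TVert.vi k) (TVert.vj k) := Or.inl rfl
lemma trap_adj_vi_vj' {m : ℕ} (k : Fin m) :
    (Trap m).Adj (TVert.vi (finRot k)) (TVert.vj k) := Or.inr rfl

lemma tau_allowed {m : ℕ} : tau K m ∈ allowedMod K (TVert m) (Trap m) 3 := by
  rw [tau]
  refine Submodule.sum_mem _ fun k _ => sub_mem ?_ ?_
  · refine Submodule.subset_span ⟨_, ?_, rfl⟩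
    rw [show (![TVert.a, TVert.vi k, TVert.vj k, TVert.b] : EPath (TVert m) 3)
      = pth TVert.a (TVert.vi k) (TVert.vj k) TVert.b from rfl, allowed4_iff]
    exact ⟨trap_adj_a_vi k, trap_adj_vi_vj k, trap_adj_vj_b k⟩
  · refine Submodule.subset_span ⟨_, ?_, rfl⟩
    rw [show (![TVert.a, TVert.vi (finRot k), TVert.vj k, TVert.b] : EPath (TVert m) 3)
      = pth TVert.a (TVert.vi (finRot k)) (TVert.vj k) TVert.b from rfl, allowed4_iff]
    exact ⟨trap_adj_a_vi _, trap_adj_vi_vj' k, trap_adj_vj_b k⟩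

lemma bdry_abpath {m : ℕ} (x y : Fin m) :
    bdry K (TVert m) 2 (Finsupp.single ![TVert.a, TVert.vi x, TVert.vj y, TVert.b] (1:K)) =
      Finsupp.single ![TVert.vi x, TVert.vj y, TVert.b] 1
      - Finsupp.single ![TVert.a, TVert.vj y, TVert.b] 1
      + Finsupp.single ![TVert.a, TVert.vi x, TVert.b] 1
      - Finsupp.single ![TVert.a, TVert.vi x, TVert.vj y] 1 := by
  rw [show (![TVert.a, TVert.vi x, TVert.vj y, TVert.b] : EPath (TVert m) 3)
    = pth TVert.a (TVert.vi x) (TVert.vj y) TVert.b from rfl]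
  rw [bdry3_single, pth_zero, pth_one, pth_two, pth_three]
  rw [if_pos ((reg3_iff _ _ _).mpr ⟨by simp, by simp⟩),
    if_pos ((reg3_iff _ _ _).mpr ⟨by simp, by simp⟩),
    if_pos ((reg3_iff _ _ _).mpr ⟨by simp, by simp⟩),
    if_pos ((reg3_iff _ _ _).mpr ⟨by simp, by simp⟩), one_smul]

lemma bdry_tau (m : ℕ) :
    bdry K (TVert m) 2 (tau K m) =
      ∑ k : Fin m,
        (Finsupp.single ![TVert.vi k, TVert.vj k, TVert.b] (1:K)
        - Finsupp.single ![TVert.vi (finRot k), TVert.vj k, TVert.b] 1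
        - Finsupp.single ![TVert.a, TVert.vi k, TVert.vj k] 1
        + Finsupp.single ![TVert.a, TVert.vi (finRot k), TVert.vj k] 1) := by
  rw [tau, map_sum]
  have step : ∀ k : Fin m,
      bdry K (TVert m) 2
        (Finsupp.single ![TVert.a, TVert.vi k, TVert.vj k, TVert.b] (1:K)
          - Finsupp.single ![TVert.a, TVert.vi (finRot k), TVert.vj k, TVert.b] 1)
      = (Finsupp.single ![TVert.vi k, TVert.vj k, TVert.b] (1:K)
        - Finsupp.single ![TVert.vi (finRot k), TVert.vj k, TVert.b] 1
        - Finsupp.single ![TVert.a, TVert.vi k, TVert.vj k] 1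
        + Finsupp.single ![TVert.a, TVert.vi (finRot k), TVert.vj k] 1)
        + (Finsupp.single ![TVert.a, TVert.vi k, TVert.b] 1
          - Finsupp.single ![TVert.a, TVert.vi (finRot k), TVert.b] 1) := by
    intro k
    rw [map_sub, bdry_abpath, bdry_abpath]
    abel
  rw [Finset.sum_congr rfl (fun k _ => step k), Finset.sum_add_distrib]
  have hC : ∑ k : Fin m, (Finsupp.single ![TVert.a, TVert.vi (finRot k), TVert.b] (1:K))
      = ∑ k : Fin m, Finsupp.single ![TVert.a, TVert.vi k, TVert.b] (1:K) :=
    Function.Bijective.sum_comp finRot_bijective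
      (fun t => Finsupp.single ![TVert.a, TVert.vi t, TVert.b] (1:K))
  rw [Finset.sum_sub_distrib, hC, sub_self, add_zero]

lemma omega3_eq (G : Dgraph V) :
    Omega K V G 3 = allowedMod K V G 3 ⊓ (allowedMod K V G 2).comap (bdry K V 2) := rfl

lemma bdry_tau_allowed (m : ℕ) :
    bdry K (TVert m) 2 (tau K m) ∈ allowedMod K (TVert m) (Trap m) 2 := by
  rw [bdry_tau]
  refine Submodule.sum_mem _ fun k _ => add_mem (sub_mem (sub_mem ?_ ?_) ?_) ?_ <;>
    refine Submodule.subset_span ⟨_, ?_, rfl⟩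
  · exact (allowed3_iff _ _ _ _).mpr ⟨trap_adj_vi_vj k, trap_adj_vj_b k⟩
  · exact (allowed3_iff _ _ _ _).mpr ⟨trap_adj_vi_vj' k, trap_adj_vj_b k⟩
  · exact (allowed3_iff _ _ _ _).mpr ⟨trap_adj_a_vi k, trap_adj_vi_vj k⟩
  · exact (allowed3_iff _ _ _ _).mpr ⟨trap_adj_a_vi _, trap_adj_vi_vj' k⟩

lemma tau_omega (m : ℕ) : tau K m ∈ Omega K (TVert m) (Trap m) 3 := by
  rw [omega3_eq, Submodule.mem_inf]
  exact ⟨tau_allowed, bdry_tau_allowed m⟩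

lemma image_omega {G : Dgraph V} {m : ℕ} (f : DgraphMap (Trap m) G) :
    inducedMap K f.toFun 3 (tau K m) ∈ Omega K V G 3 := by
  rw [omega3_eq, Submodule.mem_inf]
  constructor
  · exact inducedMap_allowed f tau_allowed
  · rw [Submodule.mem_comap, chain]
    exact inducedMap_allowed f (bdry_tau_allowed m)

end Statement11Proof
namespace Statement11Proof

variable {K : Type*} [Field K] {V : Type*}

lemma cons3_ext {u v w u' v' w' : V} :
    (![u, v, w] : EPath V 2) = ![u', v', w'] ↔ u = u' ∧ v = v' ∧ w = w' := by
  constructor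
  · intro h; exact ⟨congrFun h 0, congrFun h 1, congrFun h 2⟩
  · rintro ⟨rfl, rfl, rfl⟩; rfl

lemma epath2_eq (g : EPath V 2) : g = ![g 0, g 1, g 2] := by
  funext i; fin_cases i <;> rfl

noncomputable def wcoef (p : EPath V 3) (g : EPath V 2) : K :=
  ∑ q : Fin 4, ((-1 : K) ^ (q : ℕ)) * (if p ∘ q.succAbove = g then 1 else 0)

lemma bdryFull_apply (u : EPath V 3 →₀ K) (g : EPath V 2) :
    bdryFull K V 2 u g = ∑ p ∈ u.support, u p * wcoef p g := by
  rw [bdryFull, Finsupp.linearCombination_apply, Finsupp.sum_apply, Finsupp.sum]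
  refine Finset.sum_congr rfl fun p _ => ?_
  simp only [Finsupp.smul_apply, Finsupp.finset_sum_apply, Finsupp.single_apply, smul_eq_mul,
    wcoef, Finset.mul_sum]

lemma wcoef_eval (p : EPath V 3) (g : EPath V 2) :
    wcoef p g = ((if (![p 1, p 2, p 3] : EPath V 2) = g then (1:K) else 0)
      - (if (![p 0, p 2, p 3] : EPath V 2) = g then 1 else 0)
      + (if (![p 0, p 1, p 3] : EPath V 2) = g then 1 else 0)
      - (if (![p 0, p 1, p 2] : EPath V 2) = g then 1 else 0)) := by
  rw [wcoef, Fin.sum_univ_four, face0, face1, face2, face3]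
  have v0 : (((0:Fin 4)) : ℕ) = 0 := rfl
  have v1 : (((1:Fin 4)) : ℕ) = 1 := rfl
  have v2 : (((2:Fin 4)) : ℕ) = 2 := rfl
  have v3 : (((3:Fin 4)) : ℕ) = 3 := rfl
  rw [v0, v1, v2, v3]
  ring

lemma allowed_face_A {G : Dgraph V} {p : EPath V 3} (h : IsAllowedPath G p) :
    IsAllowedPath G ![p 1, p 2, p 3] := (allowed3_iff _ _ _ _).mpr ⟨h 1, h 2⟩

lemma allowed_face_B {G : Dgraph V} {p : EPath V 3} (h : IsAllowedPath G p) :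
    IsAllowedPath G ![p 0, p 1, p 2] := (allowed3_iff _ _ _ _).mpr ⟨h 0, h 1⟩

/-- The `(A,B)`-cluster part of `ω`. -/
noncomputable def clusterOf (A B : V) (ω : EPath V 3 →₀ K) : EPath V 3 →₀ K :=
  ω.filter (fun p => p 0 = A ∧ p 3 = B)

lemma clusterOf_support (A B : V) (ω : EPath V 3 →₀ K) :
    (clusterOf A B ω).support ⊆ ω.support := by
  rw [clusterOf, Finsupp.support_filter]
  exact Finset.filter_subset _ _

lemma mem_clusterOf_support {A B : V} {ω : EPath V 3 →₀ K} {p : EPath V 3}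
    (hp : p ∈ (clusterOf A B ω).support) : p ∈ ω.support ∧ p 0 = A ∧ p 3 = B := by
  rw [clusterOf, Finsupp.support_filter, Finset.mem_filter] at hp
  exact hp

lemma clusterOf_apply_of_mem {A B : V} {ω : EPath V 3 →₀ K} {p : EPath V 3}
    (h0 : p 0 = A) (h3 : p 3 = B) : clusterOf A B ω p = ω p :=
  Finsupp.filter_apply_pos _ _ ⟨h0, h3⟩

lemma clusterOf_apply_of_not {A B : V} {ω : EPath V 3 →₀ K} {p : EPath V 3}
    (h : ¬ (p 0 = A ∧ p 3 = B)) : clusterOf A B ω p = 0 :=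
  Finsupp.filter_apply_neg _ _ h

/-- In an element of `Ω₃`, the boundary evaluated at a regular non-allowed 2-path vanishes. -/
lemma bdryFull_eq_zero_of_omega {G : Dgraph V} {u : EPath V 3 →₀ K}
    (hu : u ∈ Omega K V G 3) {g : EPath V 2} (hreg : IsRegularPath g)
    (hnal : ¬ IsAllowedPath G g) : bdryFull K V 2 u g = 0 := by
  rw [omega3_eq, Submodule.mem_inf, Submodule.mem_comap] at hu
  by_contra hne
  have h1 : bdry K V 2 u g ≠ 0 := by
    rw [bdry, LinearMap.comp_apply, regProj_apply, if_pos hreg]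
    exact hne
  exact hnal (mem_allowedMod_iff.mp hu.2 g (Finsupp.mem_support_iff.mpr h1))

lemma cluster_omega {G : Dgraph V} {ω : EPath V 3 →₀ K} (hω : ω ∈ Omega K V G 3) (A B : V) :
    clusterOf A B ω ∈ Omega K V G 3 := by
  have hω2 := hω
  rw [omega3_eq, Submodule.mem_inf] at hω2
  have hsupp : ∀ p ∈ ω.support, IsAllowedPath G p := mem_allowedMod_iff.mp hω2.1
  rw [omega3_eq, Submodule.mem_inf, Submodule.mem_comap]
  constructor
  · exact mem_allowedMod_iff.mpr fun p hp => hsupp p (clusterOf_support A B ω hp)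
  · rw [mem_allowedMod_iff]
    intro g hg
    rw [Finsupp.mem_support_iff, bdry, LinearMap.comp_apply, regProj_apply] at hg
    by_cases hreg : IsRegularPath g
    · rw [if_pos hreg] at hg
      by_contra hnal
      apply hg
      -- key computation
      have hωg : bdryFull K V 2 ω g = 0 := bdryFull_eq_zero_of_omega hω hreg hnal
      -- indicators vanish for faces 0 and 3 whenever p is allowed
      have ind0 : ∀ p ∈ ω.support, (![p 1, p 2, p 3] : EPath V 2) = g → False := by
        intro p hp he
        exact hnal (he ▸ allowed_face_A (hsupp p hp))
      have ind3 : ∀ p ∈ ω.support, (![p 0, p 1, p 2] : EPath V 2) = g → False := by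
        intro p hp he
        exact hnal (he ▸ allowed_face_B (hsupp p hp))
      by_cases hAB : g 0 = A ∧ g 2 = B
      · -- cluster boundary agrees with full boundary at such g
        have : bdryFull K V 2 (clusterOf A B ω) g = bdryFull K V 2 ω g := by
          rw [bdryFull_apply, bdryFull_apply]
          rw [Finset.sum_subset (clusterOf_support A B ω)]
          · refine Finset.sum_congr rfl fun p hp => ?_
            by_cases hcl : p 0 = A ∧ p 3 = B
            · rw [clusterOf_apply_of_mem hcl.1 hcl.2]
            · suffices h : wcoef p g = (0:K) by rw [h, mul_zero, mul_zero]
              rw [wcoef_eval]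
              rw [if_neg (fun he => ind0 p hp he), if_neg ?_, if_neg ?_,
                if_neg (fun he => ind3 p hp he)]
              · ring
              · intro he
                have e0 : p 0 = g 0 := congrFun he 0
                have e2 : p 3 = g 2 := congrFun he 2
                exact hcl ⟨e0.trans hAB.1, e2.trans hAB.2⟩
              · intro he
                have e0 : p 0 = g 0 := congrFun he 0
                have e2 : p 3 = g 2 := congrFun he 2
                exact hcl ⟨e0.trans hAB.1, e2.trans hAB.2⟩
          · intro p hp hnp
            rw [Finsupp.notMem_support_iff.mp
              (fun hmem => hnp hmem)]
            · ring
        rw [this, hωg]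
      · -- cluster boundary vanishes at such g
        rw [bdryFull_apply]
        refine Finset.sum_eq_zero fun p hp => ?_
        obtain ⟨hpω, h0, h3⟩ := mem_clusterOf_support hp
        suffices h : wcoef p g = (0:K) by rw [h, mul_zero]
        rw [wcoef_eval]
        rw [if_neg (fun he => ind0 p hpω he), if_neg ?_, if_neg ?_,
          if_neg (fun he => ind3 p hpω he)]
        · ring
        · intro he
          have e0 : p 0 = g 0 := congrFun he 0
          have e2 : p 3 = g 2 := congrFun he 2
          exact hAB ⟨e0.symm.trans h0, e2.symm.trans h3⟩
        · intro he
          have e0 : p 0 = g 0 := congrFun he 0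
          have e2 : p 3 = g 2 := congrFun he 2
          exact hAB ⟨e0.symm.trans h0, e2.symm.trans h3⟩
    · rw [if_neg hreg] at hg
      exact absurd rfl hg

end Statement11Proof
namespace Statement11Proof

variable {K : Type*} [Field K] {V : Type*}

section Cluster

variable {G : Dgraph V} {A B : V} {ω' : EPath V 3 →₀ K}

lemma cluster_shape (hcl : ∀ p ∈ ω'.support, p 0 = A ∧ p 3 = B) {p : EPath V 3}
    (hp : p ∈ ω'.support) : p = pth A (p 1) (p 2) B := by
  funext i
  fin_cases i
  · exact (hcl p hp).1
  · rfl
  · rfl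
  · exact (hcl p hp).2

lemma col_sum_zero (hΩ : ω' ∈ Omega K V G 3)
    (hcl : ∀ p ∈ ω'.support, p 0 = A ∧ p 3 = B) {y : V}
    (hyA : y ≠ A) (hyB : y ≠ B) (hnadj : ¬ G.Adj A y) :
    ∑ p ∈ ω'.support.filter (fun p => p 2 = y), ω' p = 0 := by
  have hΩ2 := hΩ
  rw [omega3_eq, Submodule.mem_inf] at hΩ2
  have hsupp : ∀ p ∈ ω'.support, IsAllowedPath G p := mem_allowedMod_iff.mp hΩ2.1
  have h0 : bdryFull K V 2 ω' ![A, y, B] = 0 := by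
    refine bdryFull_eq_zero_of_omega hΩ ((reg3_iff _ _ _).mpr ⟨Ne.symm hyA, hyB⟩) ?_
    rw [allowed3_iff]; rintro ⟨h1, _⟩; exact hnadj h1
  rw [bdryFull_apply] at h0
  have hterm : ∀ p ∈ ω'.support, ω' p * wcoef p ![A, y, B]
      = -(if p 2 = y then ω' p else 0) := by
    intro p hp
    have hal := hsupp p hp
    have h0A : p 0 = A := (hcl p hp).1
    have h3B : p 3 = B := (hcl p hp).2
    have hc0 : ¬ ((![p 1, p 2, p 3] : EPath V 2) = ![A, y, B]) := by
      intro he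
      have e1 : p 1 = A := congrFun he 0
      have h9 : G.Adj (p 0) (p 1) := hal 0
      rw [h0A, e1] at h9
      exact G.loopless A h9
    have hc2 : ¬ ((![p 0, p 1, p 3] : EPath V 2) = ![A, y, B]) := by
      intro he
      have e1 : p 1 = y := congrFun he 1
      have h9 : G.Adj (p 0) (p 1) := hal 0
      rw [h0A, e1] at h9
      exact hnadj h9
    have hc3 : ¬ ((![p 0, p 1, p 2] : EPath V 2) = ![A, y, B]) := by
      intro he
      have e2 : p 2 = B := congrFun he 2
      have h9 : G.Adj (p 2) (p 3) := hal 2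
      rw [h3B, e2] at h9
      exact G.loopless B h9
    have hc1 : ((![p 0, p 2, p 3] : EPath V 2) = ![A, y, B]) ↔ p 2 = y := by
      constructor
      · intro he; exact congrFun he 1
      · intro hpy; exact cons3_ext.mpr ⟨h0A, hpy, h3B⟩
    rw [wcoef_eval, if_neg hc0, if_neg hc2, if_neg hc3]
    by_cases hpy : p 2 = y
    · rw [if_pos (hc1.mpr hpy), if_pos hpy]; ring
    · rw [if_neg (fun he => hpy (hc1.mp he)), if_neg hpy]; ring
  rw [Finset.sum_congr rfl hterm, Finset.sum_neg_distrib, neg_eq_zero] at h0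
  rw [Finset.sum_filter]
  exact h0

lemma row_sum_zero (hΩ : ω' ∈ Omega K V G 3)
    (hcl : ∀ p ∈ ω'.support, p 0 = A ∧ p 3 = B) {x : V}
    (hxA : x ≠ A) (hxB : x ≠ B) (hnadj : ¬ G.Adj x B) :
    ∑ p ∈ ω'.support.filter (fun p => p 1 = x), ω' p = 0 := by
  have hΩ2 := hΩ
  rw [omega3_eq, Submodule.mem_inf] at hΩ2
  have hsupp : ∀ p ∈ ω'.support, IsAllowedPath G p := mem_allowedMod_iff.mp hΩ2.1
  have h0 : bdryFull K V 2 ω' ![A, x, B] = 0 := by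
    refine bdryFull_eq_zero_of_omega hΩ ((reg3_iff _ _ _).mpr ⟨Ne.symm hxA, hxB⟩) ?_
    rw [allowed3_iff]; rintro ⟨_, h2⟩; exact hnadj h2
  rw [bdryFull_apply] at h0
  have hterm : ∀ p ∈ ω'.support, ω' p * wcoef p ![A, x, B]
      = (if p 1 = x then ω' p else 0) := by
    intro p hp
    have hal := hsupp p hp
    have h0A : p 0 = A := (hcl p hp).1
    have h3B : p 3 = B := (hcl p hp).2
    have hc0 : ¬ ((![p 1, p 2, p 3] : EPath V 2) = ![A, x, B]) := by
      intro he
      have e1 : p 1 = A := congrFun he 0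
      have h9 : G.Adj (p 0) (p 1) := hal 0
      rw [h0A, e1] at h9
      exact G.loopless A h9
    have hc1 : ¬ ((![p 0, p 2, p 3] : EPath V 2) = ![A, x, B]) := by
      intro he
      have e1 : p 2 = x := congrFun he 1
      have h9 : G.Adj (p 2) (p 3) := hal 2
      rw [h3B, e1] at h9
      exact hnadj h9
    have hc3 : ¬ ((![p 0, p 1, p 2] : EPath V 2) = ![A, x, B]) := by
      intro he
      have e2 : p 2 = B := congrFun he 2
      have h9 : G.Adj (p 2) (p 3) := hal 2
      rw [h3B, e2] at h9
      exact G.loopless B h9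
    have hc2 : ((![p 0, p 1, p 3] : EPath V 2) = ![A, x, B]) ↔ p 1 = x := by
      constructor
      · intro he; exact congrFun he 1
      · intro hpx; exact cons3_ext.mpr ⟨h0A, hpx, h3B⟩
    rw [wcoef_eval, if_neg hc0, if_neg hc1, if_neg hc3]
    by_cases hpx : p 1 = x
    · rw [if_pos (hc2.mpr hpx), if_pos hpx]; ring
    · rw [if_neg (fun he => hpx (hc2.mp he)), if_neg hpx]; ring
  rw [Finset.sum_congr rfl hterm] at h0
  rw [Finset.sum_filter]
  exact h0

/-- The set of "edges" of the cluster. -/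
def eset (A B : V) (ω' : EPath V 3 →₀ K) : Set (V × V) :=
  {e | pth A e.1 e.2 B ∈ ω'.support}

lemma eset_finite : (eset A B ω').Finite := by
  refine Set.Finite.subset (Set.Finite.image (fun p => (p 1, p 2)) ω'.support.finite_toSet) ?_
  rintro ⟨u, v⟩ he
  exact ⟨pth A u v B, he, rfl⟩

lemma eset_adj (hΩ : ω' ∈ Omega K V G 3) {e : V × V} (he : e ∈ eset A B ω') :
    G.Adj A e.1 ∧ G.Adj e.1 e.2 ∧ G.Adj e.2 B := by
  have hΩ2 := hΩ
  rw [omega3_eq, Submodule.mem_inf] at hΩ2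
  have hal := mem_allowedMod_iff.mp hΩ2.1 _ he
  exact (allowed4_iff G A e.1 e.2 B).mp hal

lemma eset_hc (hΩ : ω' ∈ Omega K V G 3) (hcl : ∀ p ∈ ω'.support, p 0 = A ∧ p 3 = B) :
    ∀ e ∈ eset A B ω', ¬ (G.Adj A e.2 ∨ e.2 = A) →
      ∃ x', x' ≠ e.1 ∧ (x', e.2) ∈ eset A B ω' := by
  rintro ⟨u, v⟩ he hnf
  push_neg at hnf
  have hadj := eset_adj hΩ he
  have hyB : v ≠ B := fun h => G.loopless B (h ▸ hadj.2.2)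
  have hsum := col_sum_zero hΩ hcl hnf.2 hyB hnf.1
  by_contra hno
  push_neg at hno
  have hT : ω'.support.filter (fun p => p 2 = v) = {pth A u v B} := by
    apply Finset.eq_singleton_iff_unique_mem.mpr
    constructor
    · exact Finset.mem_filter.mpr ⟨he, rfl⟩
    · intro q hq
      obtain ⟨hq1, hq2⟩ := Finset.mem_filter.mp hq
      have hsh := cluster_shape hcl hq1
      have hmem : (q 1, v) ∈ eset A B ω' := by
        have h1 : pth A (q 1) (q 2) B ∈ ω'.support := hsh ▸ hq1
        rw [hq2] at h1
        exact h1
      have h1u : q 1 = u := by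
        by_contra hne
        exact hno (q 1) hne hmem
      calc q = pth A (q 1) (q 2) B := hsh
        _ = pth A u v B := by rw [h1u, hq2]
  rw [hT, Finset.sum_singleton] at hsum
  exact Finsupp.mem_support_iff.mp he hsum

lemma eset_hr (hΩ : ω' ∈ Omega K V G 3) (hcl : ∀ p ∈ ω'.support, p 0 = A ∧ p 3 = B) :
    ∀ e ∈ eset A B ω', ¬ (G.Adj e.1 B ∨ e.1 = B) →
      ∃ y', y' ≠ e.2 ∧ (e.1, y') ∈ eset A B ω' := by
  rintro ⟨u, v⟩ he hnf
  push_neg at hnf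
  have hadj := eset_adj hΩ he
  have hxA : u ≠ A := fun h => G.loopless A (h ▸ hadj.1)
  have hsum := row_sum_zero hΩ hcl hxA hnf.2 hnf.1
  by_contra hno
  push_neg at hno
  have hT : ω'.support.filter (fun p => p 1 = u) = {pth A u v B} := by
    apply Finset.eq_singleton_iff_unique_mem.mpr
    constructor
    · exact Finset.mem_filter.mpr ⟨he, rfl⟩
    · intro q hq
      obtain ⟨hq1, hq2⟩ := Finset.mem_filter.mp hq
      have hsh := cluster_shape hcl hq1
      have hmem : (u, q 2) ∈ eset A B ω' := by
        have h1 : pth A (q 1) (q 2) B ∈ ω'.support := hsh ▸ hq1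
        rw [hq2] at h1
        exact h1
      have h2v : q 2 = v := by
        by_contra hne
        exact hno (q 2) hne hmem
      calc q = pth A (q 1) (q 2) B := hsh
        _ = pth A u v B := by rw [h2v, hq2]
  rw [hT, Finset.sum_singleton] at hsum
  exact Finsupp.mem_support_iff.mp he hsum

end Cluster

end Statement11Proof
namespace Statement11Proof

section Walk

variable {α β : Type*}

/-- Injectivity of the first `n+1` values of a sequence. -/
def WInj (n : ℕ) (x : ℕ → α) : Prop := ∀ i ≤ n, ∀ j ≤ n, x i = x j → i = j

/-- A partial snake: pairs and links all in `S`, both sides injective. -/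
def IsPartial (S : Set (α × β)) (n : ℕ) (x : ℕ → α) (y : ℕ → β) : Prop :=
  WInj n x ∧ WInj n y ∧ (∀ k ≤ n, (x k, y k) ∈ S) ∧ (∀ k < n, (x (k + 1), y k) ∈ S)

/-- A cycle in `S`. -/
def IsCyc (S : Set (α × β)) : Prop :=
  ∃ (m : ℕ) (x : ℕ → α) (y : ℕ → β), 2 ≤ m ∧ WInj (m - 1) x ∧ WInj (m - 1) y ∧
    (∀ k < m, (x k, y k) ∈ S) ∧ (∀ k < m, (x ((k + 1) % m), y k) ∈ S)

/-- Possible right ends of a completed snake. -/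
def RightEnd (S : Set (α × β)) (FR : α → Prop) (FC : β → Prop)
    (n : ℕ) (x : ℕ → α) (y : ℕ → β) : Prop :=
  FC (y n) ∨ (FR (x (n + 1)) ∧ (x (n + 1), y n) ∈ S ∧ ∀ i ≤ n, x (n + 1) ≠ x i)

theorem grow (S : Set (α × β)) (FR : α → Prop) (FC : β → Prop) (hfin : S.Finite)
    (hr : ∀ e ∈ S, ¬ FR e.1 → ∃ b', b' ≠ e.2 ∧ (e.1, b') ∈ S)
    (hc : ∀ e ∈ S, ¬ FC e.2 → ∃ a', a' ≠ e.1 ∧ (a', e.2) ∈ S) :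
    ∀ (d n : ℕ) (x : ℕ → α) (y : ℕ → β), hfin.toFinset.card ≤ n + d →
      IsPartial S n x y →
      IsCyc S ∨ ∃ (n' : ℕ) (x' : ℕ → α) (y' : ℕ → β),
        IsPartial S n' x' y' ∧ x' 0 = x 0 ∧ y' 0 = y 0 ∧ RightEnd S FR FC n' x' y' := by
  intro d
  induction d with
  | zero =>
    intro n x y hcard hp
    exfalso
    have hinj : Set.InjOn (fun k => (x k, y k)) ↑(Finset.range (n + 1)) := by
      intro i hi j hj hij
      simp only [Finset.coe_range, Set.mem_Iio] at hi hj
      have hx : x i = x j := congrArg Prod.fst hij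
      exact hp.1 i (by omega) j (by omega) hx
    have hmaps : ∀ k ∈ Finset.range (n + 1), (x k, y k) ∈ hfin.toFinset := by
      intro k hk
      rw [Finset.mem_range] at hk
      rw [Set.Finite.mem_toFinset]
      exact hp.2.2.1 k (by omega)
    have hle := Finset.card_le_card_of_injOn (fun k => (x k, y k)) hmaps hinj
    rw [Finset.card_range] at hle
    omega
  | succ d ih =>
    intro n x y hcard hp
    obtain ⟨hxinj, hyinj, hpair, hlink⟩ := hp
    by_cases hFC : FC (y n)
    · exact Or.inr ⟨n, x, y, ⟨hxinj, hyinj, hpair, hlink⟩, rfl, rfl, Or.inl hFC⟩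
    obtain ⟨x', hx'ne, hx'S⟩ := hc (x n, y n) (hpair n le_rfl) hFC
    by_cases hxold : ∃ j ≤ n, x' = x j
    · -- cycle of the first kind
      obtain ⟨j, hj, hx'eq⟩ := hxold
      have hjn : j < n := by
        rcases Nat.lt_or_ge j n with h | h
        · exact h
        · exfalso; exact hx'ne (by rw [hx'eq, Nat.le_antisymm hj h])
      refine Or.inl ⟨n + 1 - j, (fun i => x (j + i)), (fun i => y (j + i)), by omega, ?_, ?_, ?_, ?_⟩
      · intro i hi i' hi' he
        beta_reduce at he
        have := hxinj (j + i) (by omega) (j + i') (by omega) he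
        omega
      · intro i hi i' hi' he
        beta_reduce at he
        have := hyinj (j + i) (by omega) (j + i') (by omega) he
        omega
      · intro k hk
        beta_reduce
        exact hpair (j + k) (by omega)
      · intro k hk
        beta_reduce
        rcases Nat.lt_or_ge k (n - j) with h | h
        · rw [Nat.mod_eq_of_lt (by omega)]
          have := hlink (j + k) (by omega)
          rw [show j + k + 1 = j + (k + 1) from by omega] at this
          exact this
        · have hk' : k = n - j := by omega
          have hmod : (k + 1) % (n + 1 - j) = 0 := by
            rw [hk', show n - j + 1 = n + 1 - j from by omega, Nat.mod_self]
          rw [hmod, hk', add_zero, show j + (n - j) = n from by omega, ← hx'eq]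
          exact hx'S
    push_neg at hxold
    by_cases hFR : FR x'
    · -- stop with a free row overhang
      refine Or.inr ⟨n, (fun i => if i = n + 1 then x' else x i), y, ⟨?_, hyinj, ?_, ?_⟩,
        by simp, rfl, Or.inr ⟨by simp [hFR], by simpa using hx'S, ?_⟩⟩
      · intro i hi i' hi' he
        beta_reduce at he
        rw [if_neg (by omega : ¬ i = n + 1), if_neg (by omega : ¬ i' = n + 1)] at he
        exact hxinj i hi i' hi' he
      · intro k hk
        beta_reduce
        rw [if_neg (by omega : ¬ k = n + 1)]
        exact hpair k hk
      · intro k hk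
        beta_reduce
        rw [if_neg (by omega : ¬ k + 1 = n + 1)]
        exact hlink k hk
      · intro i hi
        beta_reduce
        rw [if_pos rfl, if_neg (by omega : ¬ i = n + 1)]
        exact fun he => (hxold i hi) he
    obtain ⟨y', hy'ne, hy'S⟩ := hr (x', y n) hx'S hFR
    by_cases hyold : ∃ j ≤ n, y' = y j
    · -- cycle of the second kind
      obtain ⟨j, hj, hy'eq⟩ := hyold
      have hjn : j < n := by
        rcases Nat.lt_or_ge j n with h | h
        · exact h
        · exfalso; exact hy'ne (by rw [hy'eq, Nat.le_antisymm hj h])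
      refine Or.inl ⟨n + 1 - j, (fun i => if i = 0 then x' else x (j + i)),
        (fun i => y (j + i)), by omega, ?_, ?_, ?_, ?_⟩
      · intro i hi i' hi' he
        beta_reduce at he
        by_cases h1 : i = 0 <;> by_cases h2 : i' = 0
        · omega
        · exfalso
          rw [if_pos h1, if_neg h2] at he
          exact hxold (j + i') (by omega) he
        · exfalso
          rw [if_neg h1, if_pos h2] at he
          exact hxold (j + i) (by omega) he.symm
        · rw [if_neg h1, if_neg h2] at he
          have := hxinj (j + i) (by omega) (j + i') (by omega) he
          omega
      · intro i hi i' hi' he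
        beta_reduce at he
        have := hyinj (j + i) (by omega) (j + i') (by omega) he
        omega
      · intro k hk
        beta_reduce
        by_cases h1 : k = 0
        · rw [if_pos h1, h1, add_zero, ← hy'eq]
          exact hy'S
        · rw [if_neg h1]
          exact hpair (j + k) (by omega)
      · intro k hk
        beta_reduce
        rcases Nat.lt_or_ge k (n - j) with h | h
        · rw [Nat.mod_eq_of_lt (by omega), if_neg (by omega : ¬ k + 1 = 0)]
          have := hlink (j + k) (by omega)
          rw [show j + k + 1 = j + (k + 1) from by omega] at this
          exact this
        · have hk' : k = n - j := by omega
          have hmod : (k + 1) % (n + 1 - j) = 0 := by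
            rw [hk', show n - j + 1 = n + 1 - j from by omega, Nat.mod_self]
          rw [hmod, if_pos rfl, hk', show j + (n - j) = n from by omega]
          exact hx'S
    push_neg at hyold
    -- extend the snake and recurse
    have hstep := ih (n + 1) (fun i => if i = n + 1 then x' else x i)
      (fun i => if i = n + 1 then y' else y i) (by omega) ?_
    · rcases hstep with h | ⟨n', x'', y'', hp'', h0'', hy0'', hend''⟩
      · exact Or.inl h
      · refine Or.inr ⟨n', x'', y'', hp'', ?_, ?_, hend''⟩
        · rw [h0'']
          simp
        · rw [hy0'']
          simp
    · refine ⟨?_, ?_, ?_, ?_⟩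
      · intro i hi i' hi' he
        beta_reduce at he
        by_cases h1 : i = n + 1 <;> by_cases h2 : i' = n + 1
        · omega
        · exfalso
          rw [if_pos h1, if_neg h2] at he
          exact hxold i' (by omega) he
        · exfalso
          rw [if_neg h1, if_pos h2] at he
          exact hxold i (by omega) he.symm
        · rw [if_neg h1, if_neg h2] at he
          exact hxinj i (by omega) i' (by omega) he
      · intro i hi i' hi' he
        beta_reduce at he
        by_cases h1 : i = n + 1 <;> by_cases h2 : i' = n + 1
        · omega
        · exfalso
          rw [if_pos h1, if_neg h2] at he
          exact hyold i' (by omega) he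
        · exfalso
          rw [if_neg h1, if_pos h2] at he
          exact hyold i (by omega) he.symm
        · rw [if_neg h1, if_neg h2] at he
          exact hyinj i (by omega) i' (by omega) he
      · intro k hk
        beta_reduce
        by_cases h1 : k = n + 1
        · rw [if_pos h1, if_pos h1]
          exact hy'S
        · rw [if_neg h1, if_neg h1]
          exact hpair k (by omega)
      · intro k hk
        beta_reduce
        by_cases h1 : k = n
        · rw [if_pos (by omega : k + 1 = n + 1), if_neg (by omega : ¬ k = n + 1), h1]
          exact hx'S
        · rw [if_neg (by omega : ¬ k + 1 = n + 1), if_neg (by omega : ¬ k = n + 1)]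
          exact hlink k (by omega)

end Walk

end Statement11Proof
namespace Statement11Proof

variable {K : Type*} [Field K] {V : Type*}

/-- The digraph map associated to snake data. -/
def snakeF (A B : V) (X Y : ℕ → V) (m : ℕ) : TVert m → V
  | TVert.a => A
  | TVert.b => B
  | TVert.vi k => X (k : ℕ)
  | TVert.vj k => Y (k : ℕ)

lemma reg_pth_iff (A B u v : V) :
    IsRegularPath (pth A u v B) ↔ (u ≠ A ∧ u ≠ v ∧ v ≠ B) := by
  rw [reg4_iff]
  exact ⟨fun ⟨h1, h2, h3⟩ => ⟨h1.symm, h2, h3⟩, fun ⟨h1, h2, h3⟩ => ⟨h1.symm, h2, h3⟩⟩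

lemma snake_image (G : Dgraph V) (ω : EPath V 3 →₀ K) (A B : V) (m : ℕ) (hm : 2 ≤ m)
    (X Y : ℕ → V)
    (harr : ∀ k < m, (G.Adj A (X k) ∨ X k = A) ∧ (G.Adj (Y k) B ∨ Y k = B)
      ∧ (G.Adj (X k) (Y k) ∨ X k = Y k)
      ∧ (G.Adj (X ((k + 1) % m)) (Y k) ∨ X ((k + 1) % m) = Y k))
    (hsup1 : ∀ k < m, X k ≠ A → X k ≠ Y k → Y k ≠ B → pth A (X k) (Y k) B ∈ ω.support)
    (hsup2 : ∀ k < m, X ((k + 1) % m) ≠ A → X ((k + 1) % m) ≠ Y k → Y k ≠ B →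
      pth A (X ((k + 1) % m)) (Y k) B ∈ ω.support)
    (k₀ : ℕ) (hk₀ : k₀ < m)
    (hndA : X k₀ ≠ A) (hndXY : X k₀ ≠ Y k₀) (hndB : Y k₀ ≠ B)
    (huniq : ∀ k < m, X k ≠ A → X k ≠ Y k → Y k ≠ B → X k = X k₀ → Y k = Y k₀ → k = k₀)
    (hlinkne : ∀ k < m, X ((k + 1) % m) ≠ A → X ((k + 1) % m) ≠ Y k → Y k ≠ B →
      ¬(X ((k + 1) % m) = X k₀ ∧ Y k = Y k₀)) :
    ∃ f : DgraphMap (Trap m) G,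
      inducedMap K f.toFun 3 (tau K m) ≠ 0 ∧
      (inducedMap K f.toFun 3 (tau K m)).support ⊆ ω.support := by
  -- the digraph map
  have hmapadj : ∀ ⦃u v : TVert m⦄, (Trap m).Adj u v →
      G.Adj (snakeF A B X Y m u) (snakeF A B X Y m v)
        ∨ snakeF A B X Y m u = snakeF A B X Y m v := by
    intro u v h
    cases u with
    | a =>
      cases v with
      | a => exact h.elim
      | b => exact h.elim
      | vi k =>
        rcases (harr (k : ℕ) k.isLt).1 with h' | h'
        · exact Or.inl h'
        · exact Or.inr h'.symm
      | vj k => exact h.elim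
    | b => cases v with
      | a => exact h.elim
      | b => exact h.elim
      | vi k => exact h.elim
      | vj k => exact h.elim
    | vi k =>
      cases v with
      | a => exact h.elim
      | b => exact h.elim
      | vi l => exact h.elim
      | vj l =>
        rcases (h : k = l ∨ k = finRot l) with rfl | hrot
        · exact (harr (k : ℕ) k.isLt).2.2.1
        · have hk : (k : ℕ) = ((l : ℕ) + 1) % m := by rw [hrot]; rfl
          have h2 := (harr (l : ℕ) l.isLt).2.2.2
          rw [← hk] at h2
          exact h2
    | vj k =>
      cases v with
      | a => exact h.elim
      | b =>
        rcases (harr (k : ℕ) k.isLt).2.1 with h' | h'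
        · exact Or.inl h'
        · exact Or.inr h'
      | vi l => exact h.elim
      | vj l => exact h.elim
  have himg : inducedMap K (snakeF A B X Y m) 3 (tau K m)
      = ∑ k : Fin m,
        ((if IsRegularPath (pth A (X (k:ℕ)) (Y (k:ℕ)) B)
            then Finsupp.single (pth A (X (k:ℕ)) (Y (k:ℕ)) B) (1:K) else 0)
        - (if IsRegularPath (pth A (X (((k:ℕ)+1) % m)) (Y (k:ℕ)) B)
            then Finsupp.single (pth A (X (((k:ℕ)+1) % m)) (Y (k:ℕ)) B) (1:K) else 0)) := by
    rw [tau, map_sum]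
    refine Finset.sum_congr rfl fun k _ => ?_
    rw [map_sub, inducedMap_single, inducedMap_single]
    have e1 : snakeF A B X Y m ∘ ![TVert.a, TVert.vi k, TVert.vj k, TVert.b]
        = pth A (X (k:ℕ)) (Y (k:ℕ)) B := by
      funext i; fin_cases i <;> rfl
    have e2 : snakeF A B X Y m ∘ ![TVert.a, TVert.vi (finRot k), TVert.vj k, TVert.b]
        = pth A (X (((k:ℕ)+1) % m)) (Y (k:ℕ)) B := by
      funext i; fin_cases i <;> rfl
    rw [e1, e2]
  have hterm : ∀ k : Fin m,
      ((if IsRegularPath (pth A (X (k:ℕ)) (Y (k:ℕ)) B)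
          then Finsupp.single (pth A (X (k:ℕ)) (Y (k:ℕ)) B) (1:K) else 0)
        - (if IsRegularPath (pth A (X (((k:ℕ)+1) % m)) (Y (k:ℕ)) B)
            then Finsupp.single (pth A (X (((k:ℕ)+1) % m)) (Y (k:ℕ)) B) (1:K) else 0))
        (pth A (X k₀) (Y k₀) B)
      = if k = (⟨k₀, hk₀⟩ : Fin m) then 1 else 0 := by
    intro k
    rw [Finsupp.sub_apply]
    have hT2 : (if IsRegularPath (pth A (X (((k:ℕ)+1) % m)) (Y (k:ℕ)) B)
        then Finsupp.single (pth A (X (((k:ℕ)+1) % m)) (Y (k:ℕ)) B) (1:K) else 0)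
        (pth A (X k₀) (Y k₀) B) = 0 := by
      split_ifs with hreg
      · rw [Finsupp.single_apply, if_neg]
        intro he
        obtain ⟨-, e1, e2, -⟩ := pth_inj he
        obtain ⟨n1, n2, n3⟩ := (reg_pth_iff _ _ _ _).mp hreg
        exact hlinkne (k:ℕ) k.isLt n1 n2 n3 ⟨e1, e2⟩
      · rfl
    rw [hT2, sub_zero]
    by_cases hk : k = (⟨k₀, hk₀⟩ : Fin m)
    · subst hk
      rw [if_pos rfl, if_pos ((reg_pth_iff _ _ _ _).mpr ⟨hndA, hndXY, hndB⟩),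
        Finsupp.single_apply, if_pos rfl]
    · rw [if_neg hk]
      split_ifs with hreg
      · rw [Finsupp.single_apply, if_neg]
        intro he
        obtain ⟨-, e1, e2, -⟩ := pth_inj he
        obtain ⟨n1, n2, n3⟩ := (reg_pth_iff _ _ _ _).mp hreg
        exact hk (Fin.ext (huniq (k:ℕ) k.isLt n1 n2 n3 e1 e2))
      · rfl
  have hptone : inducedMap K (snakeF A B X Y m) 3 (tau K m) (pth A (X k₀) (Y k₀) B) = 1 := by
    rw [himg, Finsupp.finset_sum_apply, Finset.sum_congr rfl (fun k _ => hterm k),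
      Finset.sum_ite_eq' Finset.univ ((⟨k₀, hk₀⟩ : Fin m)) (fun _ => (1:K)),
      if_pos (Finset.mem_univ _)]
  refine ⟨⟨snakeF A B X Y m, hmapadj⟩, ?_, ?_⟩
  · intro h0
    rw [h0] at hptone
    simp at hptone
  · intro p hp
    rw [Finsupp.mem_support_iff, himg, Finsupp.finset_sum_apply] at hp
    obtain ⟨k, -, hk⟩ := Finset.exists_ne_zero_of_sum_ne_zero hp
    rw [Finsupp.sub_apply] at hk
    have hor : ((if IsRegularPath (pth A (X (k:ℕ)) (Y (k:ℕ)) B)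
          then Finsupp.single (pth A (X (k:ℕ)) (Y (k:ℕ)) B) (1:K) else 0) p ≠ 0)
        ∨ ((if IsRegularPath (pth A (X (((k:ℕ)+1) % m)) (Y (k:ℕ)) B)
            then Finsupp.single (pth A (X (((k:ℕ)+1) % m)) (Y (k:ℕ)) B) (1:K) else 0) p ≠ 0) := by
      by_contra hcon
      push_neg at hcon
      rw [hcon.1, hcon.2, sub_zero] at hk
      exact hk rfl
    rcases hor with h | h
    · by_cases hreg : IsRegularPath (pth A (X (k:ℕ)) (Y (k:ℕ)) B)
      · rw [if_pos hreg, Finsupp.single_apply] at h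
        by_cases he : pth A (X (k:ℕ)) (Y (k:ℕ)) B = p
        · obtain ⟨n1, n2, n3⟩ := (reg_pth_iff _ _ _ _).mp hreg
          exact he ▸ hsup1 (k:ℕ) k.isLt n1 n2 n3
        · rw [if_neg he] at h
          exact absurd rfl h
      · rw [if_neg hreg] at h
        simp at h
    · by_cases hreg : IsRegularPath (pth A (X (((k:ℕ)+1) % m)) (Y (k:ℕ)) B)
      · rw [if_pos hreg, Finsupp.single_apply] at h
        by_cases he : pth A (X (((k:ℕ)+1) % m)) (Y (k:ℕ)) B = p
        · obtain ⟨n1, n2, n3⟩ := (reg_pth_iff _ _ _ _).mp hreg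
          exact he ▸ hsup2 (k:ℕ) k.isLt n1 n2 n3
        · rw [if_neg he] at h
          exact absurd rfl h
      · rw [if_neg hreg] at h
        simp at h

end Statement11Proof
namespace Statement11Proof

variable {K : Type*} [Field K] {V : Type*}

/-- The target statement: a nonzero trapezohedral image supported inside `ω.support`. -/
def Goals (K : Type*) [Field K] {V : Type*} (G : Dgraph V) (ω : EPath V 3 →₀ K) : Prop :=
  ∃ (m : ℕ), 2 ≤ m ∧ ∃ f : DgraphMap (Trap m) G,
    inducedMap K f.toFun 3 (tau K m) ≠ 0 ∧
    (inducedMap K f.toFun 3 (tau K m)).support ⊆ ω.support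

section Assemble

variable {G : Dgraph V} {ω : EPath V 3 →₀ K} {A B : V} {S : Set (V × V)}

lemma asm_cycle
    (hedge : ∀ u v, (u, v) ∈ S → pth A u v B ∈ ω.support)
    (hadjS : ∀ u v, (u, v) ∈ S → G.Adj A u ∧ G.Adj u v ∧ G.Adj v B)
    (m : ℕ) (hm : 2 ≤ m) (x : ℕ → V) (y : ℕ → V)
    (hxinj : WInj (m - 1) x) (hyinj : WInj (m - 1) y)
    (hpair : ∀ k < m, (x k, y k) ∈ S) (hlink : ∀ k < m, (x ((k + 1) % m), y k) ∈ S) :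
    Goals K G ω := by
  have hnd : ∀ u v, (u, v) ∈ S → u ≠ A ∧ u ≠ v ∧ v ≠ B := by
    intro u v huv
    obtain ⟨h1, h2, h3⟩ := hadjS u v huv
    exact ⟨fun e => G.loopless A (e ▸ h1), fun e => G.loopless u (e ▸ h2),
      fun e => G.loopless B (e ▸ h3)⟩
  refine ⟨m, hm, ?_⟩
  refine (snake_image G ω A B m hm x y ?_ ?_ ?_ 0 (by omega) ?_ ?_ ?_ ?_ ?_).imp
    (fun f hf => hf)
  · intro k hk
    obtain ⟨h1, h2, h3⟩ := hadjS _ _ (hpair k hk)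
    obtain ⟨l1, l2, l3⟩ := hadjS _ _ (hlink k hk)
    exact ⟨Or.inl h1, Or.inl h3, Or.inl h2, Or.inl l2⟩
  · intro k hk _ _ _
    exact hedge _ _ (hpair k hk)
  · intro k hk _ _ _
    exact hedge _ _ (hlink k hk)
  · exact (hnd _ _ (hpair 0 (by omega))).1
  · exact (hnd _ _ (hpair 0 (by omega))).2.1
  · exact (hnd _ _ (hpair 0 (by omega))).2.2
  · intro k hk _ _ _ _ hy
    exact hyinj k (by omega) 0 (by omega) hy
  · intro k hk _ _ _ hcol
    have hk0 : k = 0 := hyinj k (by omega) 0 (by omega) hcol.2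
    subst hk0
    rw [show (0 + 1) % m = 1 from Nat.mod_eq_of_lt (by omega)] at hcol
    have := hxinj 1 (by omega) 0 (by omega) hcol.1
    omega

lemma asm_mixed
    (hedge : ∀ u v, (u, v) ∈ S → pth A u v B ∈ ω.support)
    (hadjS : ∀ u v, (u, v) ∈ S → G.Adj A u ∧ G.Adj u v ∧ G.Adj v B)
    (n : ℕ) (r : ℕ → V) (c : ℕ → V)
    (hcinj : WInj n c) (hr01 : 1 ≤ n → r 1 ≠ r 0)
    (hpair : ∀ k ≤ n, (r k, c k) ∈ S) (hlink : ∀ k < n, (r (k + 1), c k) ∈ S)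
    (hFRr : G.Adj (r 0) B ∨ r 0 = B) (hFCc : G.Adj A (c n) ∨ c n = A) :
    Goals K G ω := by
  have hnd : ∀ u v, (u, v) ∈ S → u ≠ A ∧ u ≠ v ∧ v ≠ B := by
    intro u v huv
    obtain ⟨h1, h2, h3⟩ := hadjS u v huv
    exact ⟨fun e => G.loopless A (e ▸ h1), fun e => G.loopless u (e ▸ h2),
      fun e => G.loopless B (e ▸ h3)⟩
  refine ⟨n + 2, by omega, ?_⟩
  refine (snake_image G ω A B (n + 2) (by omega)
    (fun i => if i ≤ n then r i else A) (fun i => if i ≤ n then c i else r 0)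
    ?_ ?_ ?_ 0 (by omega) ?_ ?_ ?_ ?_ ?_).imp (fun f hf => hf)
  · intro k hk
    beta_reduce
    rcases Nat.lt_or_ge k (n + 1) with h | h
    · have hkn : k ≤ n := by omega
      rw [if_pos hkn, if_pos hkn]
      obtain ⟨h1, h2, h3⟩ := hadjS _ _ (hpair k hkn)
      refine ⟨Or.inl h1, Or.inl h3, Or.inl h2, ?_⟩
      rcases Nat.lt_or_ge k n with h' | h'
      · rw [Nat.mod_eq_of_lt (by omega), if_pos (by omega : k + 1 ≤ n)]
        exact Or.inl (hadjS _ _ (hlink k h')).2.1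
      · have hkn' : k = n := by omega
        rw [Nat.mod_eq_of_lt (by omega), if_neg (by omega : ¬ k + 1 ≤ n), hkn']
        rcases hFCc with h'' | h''
        · exact Or.inl h''
        · exact Or.inr h''.symm
    · have hkn : k = n + 1 := by omega
      subst hkn
      rw [if_neg (by omega : ¬ n + 1 ≤ n), if_neg (by omega : ¬ n + 1 ≤ n)]
      refine ⟨Or.inr rfl, hFRr, Or.inl (hadjS _ _ (hpair 0 (by omega))).1, ?_⟩
      rw [show (n + 1 + 1) % (n + 2) = 0 from by rw [show n + 1 + 1 = n + 2 from rfl, Nat.mod_self], if_pos (Nat.zero_le n)]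
      exact Or.inr rfl
  · intro k hk hA hXY hB
    beta_reduce at hA hXY hB ⊢
    rcases Nat.lt_or_ge k (n + 1) with h | h
    · rw [if_pos (by omega : k ≤ n), if_pos (by omega : k ≤ n)]
      exact hedge _ _ (hpair k (by omega))
    · exfalso
      rw [if_neg (by omega : ¬ k ≤ n)] at hA
      exact hA rfl
  · intro k hk hA hXY hB
    beta_reduce at hA hXY hB ⊢
    rcases Nat.lt_or_ge k n with h | h
    · rw [Nat.mod_eq_of_lt (by omega), if_pos (by omega : k + 1 ≤ n), if_pos (by omega : k ≤ n)]
      exact hedge _ _ (hlink k h)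
    · exfalso
      rcases Nat.lt_or_ge k (n + 1) with h' | h'
      · rw [show k = n from by omega] at hA
        rw [Nat.mod_eq_of_lt (by omega), if_neg (by omega : ¬ n + 1 ≤ n)] at hA
        exact hA rfl
      · rw [show k = n + 1 from by omega] at hXY
        rw [show (n + 1 + 1) % (n + 2) = 0 from by
            rw [show n + 1 + 1 = n + 2 from rfl, Nat.mod_self],
          if_pos (Nat.zero_le n), if_neg (by omega : ¬ n + 1 ≤ n)] at hXY
        exact hXY rfl
  · have hX0 : (fun i => if i ≤ n then r i else A) 0 = r 0 := if_pos (Nat.zero_le n)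
    beta_reduce at hX0
    rw [hX0]
    exact (hnd _ _ (hpair 0 (Nat.zero_le n))).1
  · have hX0 : (fun i => if i ≤ n then r i else A) 0 = r 0 := if_pos (Nat.zero_le n)
    have hY0 : (fun i => if i ≤ n then c i else r 0) 0 = c 0 := if_pos (Nat.zero_le n)
    beta_reduce at hX0 hY0
    rw [hX0, hY0]
    exact (hnd _ _ (hpair 0 (Nat.zero_le n))).2.1
  · have hY0 : (fun i => if i ≤ n then c i else r 0) 0 = c 0 := if_pos (Nat.zero_le n)
    beta_reduce at hY0
    rw [hY0]
    exact (hnd _ _ (hpair 0 (Nat.zero_le n))).2.2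
  · intro k hk hA hXY hB hXeq hYeq
    beta_reduce at hA hXY hB hXeq hYeq
    rcases Nat.lt_or_ge k (n + 1) with h | h
    · rw [if_pos (by omega : k ≤ n), if_pos (Nat.zero_le n)] at hYeq
      exact hcinj k (by omega) 0 (by omega) hYeq
    · exfalso
      rw [if_neg (by omega : ¬ k ≤ n)] at hA
      exact hA rfl
  · intro k hk hA hXY hB hcol
    beta_reduce at hA hXY hB hcol
    rcases Nat.lt_or_ge k n with h | h
    · rw [Nat.mod_eq_of_lt (by omega)] at hcol
      rw [if_pos (by omega : k ≤ n), if_pos (Nat.zero_le n), if_pos (Nat.zero_le n)] at hcol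
      have hk0 : k = 0 := hcinj k (by omega) 0 (by omega) hcol.2
      subst hk0
      rw [if_pos (by omega : 0 + 1 ≤ n)] at hcol
      exact hr01 (by omega) hcol.1
    · rcases Nat.lt_or_ge k (n + 1) with h' | h'
      · rw [show k = n from by omega] at hA
        rw [Nat.mod_eq_of_lt (by omega), if_neg (by omega : ¬ n + 1 ≤ n)] at hA
        exact hA rfl
      · rw [show k = n + 1 from by omega] at hXY
        rw [show (n + 1 + 1) % (n + 2) = 0 from by
            rw [show n + 1 + 1 = n + 2 from rfl, Nat.mod_self],
          if_pos (Nat.zero_le n), if_neg (by omega : ¬ n + 1 ≤ n)] at hXY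
        exact hXY rfl

end Assemble

end Statement11Proof
namespace Statement11Proof

variable {K : Type*} [Field K] {V : Type*}

section Assemble2

variable {G : Dgraph V} {ω : EPath V 3 →₀ K} {A B : V} {S : Set (V × V)}

lemma asm_rowrow
    (hedge : ∀ u v, (u, v) ∈ S → pth A u v B ∈ ω.support)
    (hadjS : ∀ u v, (u, v) ∈ S → G.Adj A u ∧ G.Adj u v ∧ G.Adj v B)
    (n : ℕ) (r : ℕ → V) (c : ℕ → V) (xs : V)
    (hcinj : WInj n c) (hr01 : 1 ≤ n → r 1 ≠ r 0) (hxsne : n = 0 → xs ≠ r 0)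
    (hpair : ∀ k ≤ n, (r k, c k) ∈ S) (hlink : ∀ k < n, (r (k + 1), c k) ∈ S)
    (hstar : (xs, c n) ∈ S)
    (hFRxs : G.Adj xs B ∨ xs = B) (hFRr0 : G.Adj (r 0) B ∨ r 0 = B) :
    Goals K G ω := by
  have hnd : ∀ u v, (u, v) ∈ S → u ≠ A ∧ u ≠ v ∧ v ≠ B := by
    intro u v huv
    obtain ⟨h1, h2, h3⟩ := hadjS u v huv
    exact ⟨fun e => G.loopless A (e ▸ h1), fun e => G.loopless u (e ▸ h2),
      fun e => G.loopless B (e ▸ h3)⟩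
  refine ⟨n + 2, by omega, ?_⟩
  refine (snake_image G ω A B (n + 2) (by omega)
    (fun i => if i ≤ n then r i else xs) (fun i => if i ≤ n then c i else B)
    ?_ ?_ ?_ 0 (by omega) ?_ ?_ ?_ ?_ ?_).imp (fun f hf => hf)
  · intro k hk
    beta_reduce
    rcases Nat.lt_or_ge k (n + 1) with h | h
    · have hkn : k ≤ n := by omega
      rw [if_pos hkn, if_pos hkn]
      obtain ⟨h1, h2, h3⟩ := hadjS _ _ (hpair k hkn)
      refine ⟨Or.inl h1, Or.inl h3, Or.inl h2, ?_⟩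
      rcases Nat.lt_or_ge k n with h' | h'
      · rw [Nat.mod_eq_of_lt (by omega), if_pos (by omega : k + 1 ≤ n)]
        exact Or.inl (hadjS _ _ (hlink k h')).2.1
      · have hkn' : k = n := by omega
        rw [Nat.mod_eq_of_lt (by omega), if_neg (by omega : ¬ k + 1 ≤ n), hkn']
        exact Or.inl (hadjS _ _ hstar).2.1
    · have hkn : k = n + 1 := by omega
      subst hkn
      rw [if_neg (by omega : ¬ n + 1 ≤ n), if_neg (by omega : ¬ n + 1 ≤ n)]
      refine ⟨Or.inl (hadjS _ _ hstar).1, Or.inr rfl, hFRxs, ?_⟩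
      rw [show (n + 1 + 1) % (n + 2) = 0 from by
          rw [show n + 1 + 1 = n + 2 from rfl, Nat.mod_self], if_pos (Nat.zero_le n)]
      exact hFRr0
  · intro k hk hA hXY hB
    beta_reduce at hA hXY hB ⊢
    rcases Nat.lt_or_ge k (n + 1) with h | h
    · rw [if_pos (by omega : k ≤ n), if_pos (by omega : k ≤ n)]
      exact hedge _ _ (hpair k (by omega))
    · exfalso
      rw [if_neg (by omega : ¬ k ≤ n)] at hB
      exact hB rfl
  · intro k hk hA hXY hB
    beta_reduce at hA hXY hB ⊢
    rcases Nat.lt_or_ge k n with h | h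
    · rw [Nat.mod_eq_of_lt (by omega), if_pos (by omega : k + 1 ≤ n), if_pos (by omega : k ≤ n)]
      exact hedge _ _ (hlink k h)
    · rcases Nat.lt_or_ge k (n + 1) with h' | h'
      · rw [show k = n from by omega]
        rw [Nat.mod_eq_of_lt (by omega), if_neg (by omega : ¬ n + 1 ≤ n),
          if_pos (by omega : n ≤ n)]
        exact hedge _ _ hstar
      · exfalso
        rw [show k = n + 1 from by omega, if_neg (by omega : ¬ n + 1 ≤ n)] at hB
        exact hB rfl
  · have hX0 : (fun i => if i ≤ n then r i else xs) 0 = r 0 := if_pos (Nat.zero_le n)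
    beta_reduce at hX0
    rw [hX0]
    exact (hnd _ _ (hpair 0 (Nat.zero_le n))).1
  · have hX0 : (fun i => if i ≤ n then r i else xs) 0 = r 0 := if_pos (Nat.zero_le n)
    have hY0 : (fun i => if i ≤ n then c i else B) 0 = c 0 := if_pos (Nat.zero_le n)
    beta_reduce at hX0 hY0
    rw [hX0, hY0]
    exact (hnd _ _ (hpair 0 (Nat.zero_le n))).2.1
  · have hY0 : (fun i => if i ≤ n then c i else B) 0 = c 0 := if_pos (Nat.zero_le n)
    beta_reduce at hY0
    rw [hY0]
    exact (hnd _ _ (hpair 0 (Nat.zero_le n))).2.2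
  · intro k hk hA hXY hB hXeq hYeq
    beta_reduce at hA hXY hB hXeq hYeq
    rcases Nat.lt_or_ge k (n + 1) with h | h
    · rw [if_pos (by omega : k ≤ n), if_pos (Nat.zero_le n)] at hYeq
      exact hcinj k (by omega) 0 (by omega) hYeq
    · exfalso
      rw [if_neg (by omega : ¬ k ≤ n)] at hB
      exact hB rfl
  · intro k hk hA hXY hB hcol
    beta_reduce at hA hXY hB hcol
    rcases Nat.lt_or_ge k n with h | h
    · rw [Nat.mod_eq_of_lt (by omega)] at hcol
      rw [if_pos (by omega : k ≤ n), if_pos (Nat.zero_le n), if_pos (Nat.zero_le n)] at hcol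
      have hk0 : k = 0 := hcinj k (by omega) 0 (by omega) hcol.2
      subst hk0
      rw [if_pos (by omega : 0 + 1 ≤ n)] at hcol
      exact hr01 (by omega) hcol.1
    · rcases Nat.lt_or_ge k (n + 1) with h' | h'
      · rw [show k = n from by omega] at hcol
        rw [Nat.mod_eq_of_lt (by omega), if_neg (by omega : ¬ n + 1 ≤ n),
          if_pos (Nat.zero_le n), if_pos (by omega : n ≤ n), if_pos (Nat.zero_le n)] at hcol
        have hn0 : n = 0 := hcinj n le_rfl 0 (Nat.zero_le n) hcol.2
        exact hxsne hn0 hcol.1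
      · rw [show k = n + 1 from by omega, if_neg (by omega : ¬ n + 1 ≤ n)] at hB
        exact hB rfl

lemma asm_colcol
    (hedge : ∀ u v, (u, v) ∈ S → pth A u v B ∈ ω.support)
    (hadjS : ∀ u v, (u, v) ∈ S → G.Adj A u ∧ G.Adj u v ∧ G.Adj v B)
    (n : ℕ) (r : ℕ → V) (c : ℕ → V) (cs : V)
    (hcinj : WInj n c) (hr01 : 1 ≤ n → r 1 ≠ r 0) (hcsne : cs ≠ c 0)
    (hpair : ∀ k ≤ n, (r k, c k) ∈ S) (hlink : ∀ k < n, (r (k + 1), c k) ∈ S)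
    (hstar : (r 0, cs) ∈ S)
    (hFCcs : G.Adj A cs ∨ cs = A) (hFCcn : G.Adj A (c n) ∨ c n = A) :
    Goals K G ω := by
  have hnd : ∀ u v, (u, v) ∈ S → u ≠ A ∧ u ≠ v ∧ v ≠ B := by
    intro u v huv
    obtain ⟨h1, h2, h3⟩ := hadjS u v huv
    exact ⟨fun e => G.loopless A (e ▸ h1), fun e => G.loopless u (e ▸ h2),
      fun e => G.loopless B (e ▸ h3)⟩
  refine ⟨n + 2, by omega, ?_⟩
  refine (snake_image G ω A B (n + 2) (by omega)
    (fun i => if i = 0 then A else r (i - 1)) (fun i => if i = 0 then cs else c (i - 1))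
    ?_ ?_ ?_ 1 (by omega) ?_ ?_ ?_ ?_ ?_).imp (fun f hf => hf)
  · intro k hk
    beta_reduce
    by_cases hk0 : k = 0
    · subst hk0
      rw [if_pos rfl, if_pos rfl]
      refine ⟨Or.inr rfl, Or.inl (hadjS _ _ hstar).2.2, ?_, ?_⟩
      · rcases hFCcs with h | h
        · exact Or.inl h
        · exact Or.inr h.symm
      · rw [show (0 + 1) % (n + 2) = 1 from Nat.mod_eq_of_lt (by omega),
          if_neg (by omega : ¬ (1:ℕ) = 0), show (1:ℕ) - 1 = 0 from rfl]
        exact Or.inl (hadjS _ _ hstar).2.1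
    · rw [if_neg hk0, if_neg hk0]
      obtain ⟨h1, h2, h3⟩ := hadjS _ _ (hpair (k - 1) (by omega))
      refine ⟨Or.inl h1, Or.inl h3, Or.inl h2, ?_⟩
      rcases Nat.lt_or_ge k (n + 1) with h | h
      · rw [Nat.mod_eq_of_lt (by omega), if_neg (by omega : ¬ k + 1 = 0),
          show k + 1 - 1 = (k - 1) + 1 from by omega]
        exact Or.inl (hadjS _ _ (hlink (k - 1) (by omega))).2.1
      · rw [show k = n + 1 from by omega, show (n + 1 + 1) % (n + 2) = 0 from by
            rw [show n + 1 + 1 = n + 2 from rfl, Nat.mod_self], if_pos rfl,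
          show n + 1 - 1 = n from by omega]
        rcases hFCcn with h' | h'
        · exact Or.inl h'
        · exact Or.inr h'.symm
  · intro k hk hA hXY hB
    beta_reduce at hA hXY hB ⊢
    by_cases hk0 : k = 0
    · exfalso
      rw [hk0] at hA
      exact hA (if_pos rfl)
    · rw [if_neg hk0, if_neg hk0]
      exact hedge _ _ (hpair (k - 1) (by omega))
  · intro k hk hA hXY hB
    beta_reduce at hA hXY hB ⊢
    by_cases hk0 : k = 0
    · subst hk0
      rw [show (0 + 1) % (n + 2) = 1 from Nat.mod_eq_of_lt (by omega),
        if_neg (by omega : ¬ (1:ℕ) = 0), show (1:ℕ) - 1 = 0 from rfl, if_pos rfl]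
      exact hedge _ _ hstar
    · rcases Nat.lt_or_ge k (n + 1) with h | h
      · rw [Nat.mod_eq_of_lt (by omega), if_neg (by omega : ¬ k + 1 = 0),
          show k + 1 - 1 = (k - 1) + 1 from by omega, if_neg hk0]
        exact hedge _ _ (hlink (k - 1) (by omega))
      · exfalso
        rw [show k = n + 1 from by omega, show (n + 1 + 1) % (n + 2) = 0 from by
            rw [show n + 1 + 1 = n + 2 from rfl, Nat.mod_self]] at hA
        exact hA (if_pos rfl)
  · have hX1 : (fun i => if i = 0 then A else r (i - 1)) 1 = r 0 := by
      beta_reduce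
      rw [if_neg (by omega : ¬ (1:ℕ) = 0)]
    beta_reduce at hX1
    rw [hX1]
    exact (hnd _ _ (hpair 0 (Nat.zero_le n))).1
  · have hX1 : (fun i => if i = 0 then A else r (i - 1)) 1 = r 0 := by
      beta_reduce
      rw [if_neg (by omega : ¬ (1:ℕ) = 0)]
    have hY1 : (fun i => if i = 0 then cs else c (i - 1)) 1 = c 0 := by
      beta_reduce
      rw [if_neg (by omega : ¬ (1:ℕ) = 0)]
    beta_reduce at hX1 hY1
    rw [hX1, hY1]
    exact (hnd _ _ (hpair 0 (Nat.zero_le n))).2.1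
  · have hY1 : (fun i => if i = 0 then cs else c (i - 1)) 1 = c 0 := by
      beta_reduce
      rw [if_neg (by omega : ¬ (1:ℕ) = 0)]
    beta_reduce at hY1
    rw [hY1]
    exact (hnd _ _ (hpair 0 (Nat.zero_le n))).2.2
  · intro k hk hA hXY hB hXeq hYeq
    beta_reduce at hA hXY hB hXeq hYeq
    by_cases hk0 : k = 0
    · exfalso
      rw [hk0] at hA
      exact hA (if_pos rfl)
    · have h2 : c (k - 1) = c 0 := by
        rw [if_neg hk0] at hYeq
        exact hYeq.trans (by rw [if_neg (by omega : ¬ (1:ℕ) = 0)])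
      have := hcinj (k - 1) (by omega) 0 (Nat.zero_le n) h2
      omega
  · intro k hk hA hXY hB hcol
    beta_reduce at hA hXY hB hcol
    have h1 : (if (k + 1) % (n + 2) = 0 then A else r ((k + 1) % (n + 2) - 1)) = r 0 :=
      hcol.1.trans (by rw [if_neg (by omega : ¬ (1:ℕ) = 0)])
    have h2 : (if k = 0 then cs else c (k - 1)) = c 0 :=
      hcol.2.trans (by rw [if_neg (by omega : ¬ (1:ℕ) = 0)])
    by_cases hk0 : k = 0
    · rw [hk0, if_pos rfl] at h2
      exact hcsne h2
    · rcases Nat.lt_or_ge k (n + 1) with h | h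
      · rw [if_neg hk0] at h2
        have hk1 : k = 1 := by
          have := hcinj (k - 1) (by omega) 0 (Nat.zero_le n) h2
          omega
        subst hk1
        rcases Nat.eq_zero_or_pos n with hn | hn
        · subst hn
          rw [show (1 + 1) % (0 + 2) = 0 from rfl] at hA h1
          exact hA (if_pos rfl)
        · rw [show (1 + 1) % (n + 2) = 2 from Nat.mod_eq_of_lt (by omega),
            if_neg (by omega : ¬ (2:ℕ) = 0), show (2:ℕ) - 1 = 1 from rfl] at h1
          exact hr01 (by omega) h1
      · rw [show k = n + 1 from by omega, show (n + 1 + 1) % (n + 2) = 0 from by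
            rw [show n + 1 + 1 = n + 2 from rfl, Nat.mod_self]] at hA
        exact hA (if_pos rfl)

end Assemble2

end Statement11Proof
namespace Statement11Proof

variable {K : Type*} [Field K] {V : Type*}

lemma isCyc_swap {S : Set (V × V)} (h : IsCyc {e : V × V | (e.2, e.1) ∈ S}) : IsCyc S := by
  obtain ⟨m, u, w, hm, huinj, hwinj, hpairT, hlinkT⟩ := h
  refine ⟨m, (fun k => w (m - 1 - k)), (fun k => u (m - 1 - k)), hm, ?_, ?_, ?_, ?_⟩
  · intro i hi j hj he
    beta_reduce at he
    have := hwinj (m - 1 - i) (by omega) (m - 1 - j) (by omega) he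
    omega
  · intro i hi j hj he
    beta_reduce at he
    have := huinj (m - 1 - i) (by omega) (m - 1 - j) (by omega) he
    omega
  · intro k hk
    beta_reduce
    exact hpairT (m - 1 - k) (by omega)
  · intro k hk
    beta_reduce
    rcases Nat.lt_or_ge k (m - 1) with h | h
    · rw [Nat.mod_eq_of_lt (by omega)]
      have := hlinkT (m - 1 - k - 1) (by omega)
      rw [Nat.mod_eq_of_lt (by omega)] at this
      have he : m - 1 - k - 1 + 1 = m - 1 - k := by omega
      rw [he] at this
      have he2 : m - 1 - (k + 1) = m - 1 - k - 1 := by omega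
      rw [he2]
      exact this
    · have hk' : k = m - 1 := by omega
      subst hk'
      rw [show (m - 1 + 1) % m = 0 from by rw [show m - 1 + 1 = m from by omega, Nat.mod_self]]
      have := hlinkT (m - 1) (by omega)
      rw [show (m - 1 + 1) % m = 0 from by
        rw [show m - 1 + 1 = m from by omega, Nat.mod_self]] at this
      rw [show m - 1 - (m - 1) = 0 from by omega, show m - 1 - 0 = m - 1 from by omega]
      exact this

lemma mainA_cluster {G : Dgraph V} {ω : EPath V 3 →₀ K} (hΩ : ω ∈ Omega K V G 3)
    (A B : V) (p₀ : EPath V 3) (hp₀ : p₀ ∈ ω.support) (h0 : p₀ 0 = A) (h3 : p₀ 3 = B) :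
    Goals K G ω := by
  have hΩ' : clusterOf A B ω ∈ Omega K V G 3 := cluster_omega hΩ A B
  have hcl : ∀ p ∈ (clusterOf A B ω).support, p 0 = A ∧ p 3 = B :=
    fun p hp => (mem_clusterOf_support hp).2
  have hp₀' : p₀ ∈ (clusterOf A B ω).support := by
    rw [Finsupp.mem_support_iff, clusterOf_apply_of_mem h0 h3]
    exact Finsupp.mem_support_iff.mp hp₀
  have hedge : ∀ u v, (u, v) ∈ eset A B (clusterOf A B ω) → pth A u v B ∈ ω.support :=
    fun u v huv => clusterOf_support A B ω huv
  have hadjS : ∀ u v, (u, v) ∈ eset A B (clusterOf A B ω) →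
      G.Adj A u ∧ G.Adj u v ∧ G.Adj v B :=
    fun u v huv => eset_adj hΩ' huv
  set S := eset A B (clusterOf A B ω) with hSdef
  have he₀ : (p₀ 1, p₀ 2) ∈ S := by
    have hsh := cluster_shape hcl hp₀'
    show pth A (p₀ 1) (p₀ 2) B ∈ (clusterOf A B ω).support
    rw [← hsh]
    exact hp₀'
  have hfin : S.Finite := eset_finite
  -- phase 1
  have hgrow1 := grow S (fun x => G.Adj x B ∨ x = B) (fun y => G.Adj A y ∨ y = A) hfin
    (eset_hr hΩ' hcl) (eset_hc hΩ' hcl) hfin.toFinset.card 0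
    (fun _ => p₀ 1) (fun _ => p₀ 2) (by omega)
    ⟨fun i hi j hj _ => by omega, fun i hi j hj _ => by omega,
      fun k hk => by beta_reduce; exact he₀, fun k hk => by omega⟩
  rcases hgrow1 with hcyc | ⟨n1, x1, y1, ⟨hx1inj, hy1inj, hp1pair, hp1link⟩, hx10, hy10, hend1⟩
  · obtain ⟨m, x, y, hm, hxinj, hyinj, hpair, hlink⟩ := hcyc
    exact asm_cycle hedge hadjS m hm x y hxinj hyinj hpair hlink
  -- transposed data for phase 2
  · have hfinT : ({e : V × V | (e.2, e.1) ∈ S} : Set (V × V)).Finite := by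
      refine Set.Finite.subset (hfin.image Prod.swap) ?_
      rintro ⟨v, u⟩ he
      exact ⟨(u, v), he, rfl⟩
    have hrT : ∀ e ∈ {e : V × V | (e.2, e.1) ∈ S}, ¬ (G.Adj A e.1 ∨ e.1 = A) →
        ∃ b', b' ≠ e.2 ∧ (e.1, b') ∈ {e : V × V | (e.2, e.1) ∈ S} := by
      rintro ⟨v, u⟩ he hnf
      obtain ⟨u', hu'ne, hu'⟩ := eset_hc hΩ' hcl (u, v) he hnf
      exact ⟨u', hu'ne, hu'⟩
    have hcT : ∀ e ∈ {e : V × V | (e.2, e.1) ∈ S}, ¬ (G.Adj e.2 B ∨ e.2 = B) →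
        ∃ a', a' ≠ e.1 ∧ (a', e.2) ∈ {e : V × V | (e.2, e.1) ∈ S} := by
      rintro ⟨v, u⟩ he hnf
      obtain ⟨y', hy'ne, hy'⟩ := eset_hr hΩ' hcl (u, v) he hnf
      exact ⟨y', hy'ne, hy'⟩
    have hgrow2 := grow {e : V × V | (e.2, e.1) ∈ S}
      (fun y => G.Adj A y ∨ y = A) (fun x => G.Adj x B ∨ x = B) hfinT hrT hcT
      hfinT.toFinset.card n1
      (fun i => y1 (n1 - i)) (fun i => x1 (n1 - i)) (by omega)
      ⟨fun i hi j hj he => by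
          beta_reduce at he
          have := hy1inj (n1 - i) (by omega) (n1 - j) (by omega) he
          omega,
        fun i hi j hj he => by
          beta_reduce at he
          have := hx1inj (n1 - i) (by omega) (n1 - j) (by omega) he
          omega,
        fun k hk => by
          show (x1 (n1 - k), y1 (n1 - k)) ∈ S
          exact hp1pair (n1 - k) (by omega),
        fun k hk => by
          show (x1 (n1 - k), y1 (n1 - (k + 1))) ∈ S
          have := hp1link (n1 - k - 1) (by omega)
          rw [show n1 - k - 1 + 1 = n1 - k from by omega] at this
          rw [show n1 - (k + 1) = n1 - k - 1 from by omega]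
          exact this⟩
    rcases hgrow2 with hcyc | ⟨n2, x2, y2, ⟨hx2inj, hy2inj, hp2pair, hp2link⟩, hx20, hy20, hend2⟩
    · obtain ⟨m, x, y, hm, hxinj, hyinj, hpair, hlink⟩ := isCyc_swap hcyc
      exact asm_cycle hedge hadjS m hm x y hxinj hyinj hpair hlink
    · -- convert the phase-2 snake back to original orientation
      have hx20' : x2 0 = y1 n1 := by
        rw [hx20]
        show y1 (n1 - 0) = y1 n1
        rw [Nat.sub_zero]
      have hy20' : y2 0 = x1 n1 := by
        rw [hy20]
        show x1 (n1 - 0) = x1 n1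
        rw [Nat.sub_zero]
      have rpair : ∀ k ≤ n2, (y2 (n2 - k), x2 (n2 - k)) ∈ S := by
        intro k hk
        exact hp2pair (n2 - k) (by omega)
      have rlink : ∀ k < n2, (y2 (n2 - (k + 1)), x2 (n2 - k)) ∈ S := by
        intro k hk
        have := hp2link (n2 - k - 1) (by omega)
        rw [show n2 - k - 1 + 1 = n2 - k from by omega] at this
        rw [show n2 - (k + 1) = n2 - k - 1 from by omega]
        exact this
      have rcinj : WInj n2 (fun i => x2 (n2 - i)) := by
        intro i hi j hj he
        beta_reduce at he
        have := hx2inj (n2 - i) (by omega) (n2 - j) (by omega) he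
        omega
      have hr01gen : 1 ≤ n2 → y2 (n2 - 1) ≠ y2 (n2 - 0) := by
        intro h1 he
        have := hy2inj (n2 - 1) (by omega) (n2 - 0) (by omega) he
        omega
      rcases hend1 with hFC1 | ⟨hFRxs, hxse, hxsfresh⟩ <;>
        rcases hend2 with hFC2 | ⟨hFCcs, hcse, hcsfresh⟩
      · -- mixed : row-free left end, col-free right end
        refine asm_mixed hedge hadjS n2 (fun i => y2 (n2 - i)) (fun i => x2 (n2 - i))
          rcinj ?_ (fun k hk => rpair k hk) (fun k hk => rlink k hk) ?_ ?_
        · intro h1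
          exact hr01gen h1
        · show G.Adj (y2 (n2 - 0)) B ∨ y2 (n2 - 0) = B
          rw [Nat.sub_zero]
          exact hFC2
        · show G.Adj A (x2 (n2 - n2)) ∨ x2 (n2 - n2) = A
          rw [Nat.sub_self, hx20']
          exact hFC1
      · -- colcol
        refine asm_colcol hedge hadjS n2 (fun i => y2 (n2 - i)) (fun i => x2 (n2 - i))
          (x2 (n2 + 1)) rcinj (fun h1 => hr01gen h1) ?_
          (fun k hk => rpair k hk) (fun k hk => rlink k hk) ?_ hFCcs ?_
        · show x2 (n2 + 1) ≠ x2 (n2 - 0)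
          rw [Nat.sub_zero]
          exact hcsfresh n2 le_rfl
        · show (y2 (n2 - 0), x2 (n2 + 1)) ∈ S
          rw [Nat.sub_zero]
          exact hcse
        · show G.Adj A (x2 (n2 - n2)) ∨ x2 (n2 - n2) = A
          rw [Nat.sub_self, hx20']
          exact hFC1
      · -- rowrow
        refine asm_rowrow hedge hadjS n2 (fun i => y2 (n2 - i)) (fun i => x2 (n2 - i))
          (x1 (n1 + 1)) rcinj (fun h1 => hr01gen h1) ?_
          (fun k hk => rpair k hk) (fun k hk => rlink k hk) ?_ hFRxs ?_
        · intro hn2 he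
          show False
          have : (fun i => y2 (n2 - i)) 0 = x1 n1 := by
            beta_reduce
            rw [Nat.sub_zero, hn2, hy20']
          beta_reduce at this
          rw [this] at he
          exact hxsfresh n1 le_rfl he
        · show (x1 (n1 + 1), x2 (n2 - n2)) ∈ S
          rw [Nat.sub_self, hx20']
          exact hxse
        · show G.Adj (y2 (n2 - 0)) B ∨ y2 (n2 - 0) = B
          rw [Nat.sub_zero]
          exact hFC2
      · -- mixed with both overhangs (forward orientation)
        refine asm_mixed hedge hadjS (n2 + 1)
          (fun i => if i = 0 then x1 (n1 + 1) else y2 (i - 1)) x2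
          ?_ ?_ ?_ ?_ ?_ hFCcs
        · intro i hi j hj he
          rcases Nat.lt_or_ge i (n2 + 1) with h1 | h1 <;>
            rcases Nat.lt_or_ge j (n2 + 1) with h2 | h2
          · exact hx2inj i (by omega) j (by omega) he
          · exfalso
            rw [show j = n2 + 1 from by omega] at he
            exact hcsfresh i (by omega) he.symm
          · exfalso
            rw [show i = n2 + 1 from by omega] at he
            exact hcsfresh j (by omega) he
          · omega
        · intro _
          beta_reduce
          rw [if_neg (by omega : ¬ (1:ℕ) = 0), if_pos rfl, show (1:ℕ) - 1 = 0 from rfl, hy20']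
          exact fun he => hxsfresh n1 le_rfl he.symm
        · intro k hk
          beta_reduce
          by_cases hk0 : k = 0
          · subst hk0
            rw [if_pos rfl, hx20']
            exact hxse
          · rw [if_neg hk0]
            rcases Nat.lt_or_ge k (n2 + 1) with h1 | h1
            · have := hp2link (k - 1) (by omega)
              rw [show k - 1 + 1 = k from by omega] at this
              exact this
            · rw [show k = n2 + 1 from by omega, show n2 + 1 - 1 = n2 from by omega]
              exact hcse
        · intro k hk
          beta_reduce
          rw [if_neg (by omega : ¬ k + 1 = 0), show k + 1 - 1 = k from by omega]
          exact hp2pair k (by omega)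
        · beta_reduce
          rw [if_pos rfl]
          exact hFRxs

lemma mainA {G : Dgraph V} {ω : EPath V 3 →₀ K} (hΩ : ω ∈ Omega K V G 3) (hne : ω ≠ 0) :
    Goals K G ω := by
  obtain ⟨p₀, hp₀⟩ := Finsupp.support_nonempty_iff.mpr hne
  exact mainA_cluster hΩ (p₀ 0) (p₀ 3) p₀ hp₀ rfl rfl

end Statement11Proof
namespace Statement11Proof

variable {K : Type*} [Field K] {V : Type*}

/-- The set of trapezohedral images lying in `Ω₃`. -/
def TSet (K : Type*) [Field K] {V : Type*} (G : Dgraph V) : Set (EPath V 3 →₀ K) :=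
  {x | (∃ (m : ℕ), 2 ≤ m ∧ ∃ f : DgraphMap (Trap m) G,
      x = inducedMap K f.toFun 3 (tau K m)) ∧ x ∈ Omega K V G 3}

lemma omega_le_span (G : Dgraph V) :
    ∀ (n : ℕ) (ω : EPath V 3 →₀ K), ω.support.card ≤ n → ω ∈ Omega K V G 3 →
      ω ∈ Submodule.span K (TSet K G) := by
  intro n
  induction n with
  | zero =>
    intro ω hcard hΩ
    have h1 : ω.support = ∅ := Finset.card_eq_zero.mp (Nat.le_zero.mp hcard)
    rw [Finsupp.support_eq_empty.mp h1]
    exact Submodule.zero_mem _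
  | succ n ih =>
    intro ω hcard hΩ
    by_cases h0 : ω = 0
    · rw [h0]
      exact Submodule.zero_mem _
    obtain ⟨m, hm, f, htne, htsub⟩ := mainA hΩ h0
    set t := inducedMap K f.toFun 3 (tau K m) with htdef
    have htΩ : t ∈ Omega K V G 3 := image_omega f
    have htT : t ∈ TSet K G := ⟨⟨m, hm, f, rfl⟩, htΩ⟩
    obtain ⟨p, hp⟩ := Finsupp.support_nonempty_iff.mpr htne
    have htp : t p ≠ 0 := Finsupp.mem_support_iff.mp hp
    have hωp : ω p ≠ 0 := Finsupp.mem_support_iff.mp (htsub hp)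
    set ω2 := ω - (ω p / t p) • t with hω2
    have hω2Ω : ω2 ∈ Omega K V G 3 := sub_mem hΩ (Submodule.smul_mem _ _ htΩ)
    have hω2p : ω2 p = 0 := by
      rw [hω2, Finsupp.sub_apply, Finsupp.smul_apply, smul_eq_mul,
        div_mul_cancel₀ _ htp, sub_self]
    have hsub2 : ω2.support ⊆ ω.support.erase p := by
      intro q hq
      rw [Finset.mem_erase]
      constructor
      · intro hqp
        rw [hqp] at hq
        exact Finsupp.mem_support_iff.mp hq hω2p
      · have h1 := Finsupp.support_sub (f := ω) (g := (ω p / t p) • t) (hω2 ▸ hq)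
        rcases Finset.mem_union.mp h1 with h | h
        · exact h
        · exact htsub (Finsupp.support_smul h)
    have hcard2 : ω2.support.card ≤ n := by
      have h1 := Finset.card_le_card hsub2
      have h2 := Finset.card_erase_of_mem (htsub hp)
      omega
    have hind := ih ω2 hcard2 hω2Ω
    have heq : ω = ω2 + (ω p / t p) • t := by
      rw [hω2, sub_add_cancel]
    rw [heq]
    exact Submodule.add_mem _ hind
      (Submodule.smul_mem _ _ (Submodule.subset_span htT))

lemma span_TSet (G : Dgraph V) :
    Submodule.span K (TSet K G) = Omega K V G 3 := by
  apply le_antisymm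
  · rw [Submodule.span_le]
    exact fun x hx => hx.2
  · intro ω hΩ
    exact omega_le_span G ω.support.card ω le_rfl hΩ

end Statement11Proof

theorem statement11 (K : Type*) [Field K] {V : Type*} (G : Dgraph V) :
    ∃ s : Set (EPath V 3 →₀ K),
      (∀ x ∈ s, ∃ (m : ℕ) (_ : 2 ≤ m) (f : DgraphMap (Trap m) G),
          x = inducedMap K f.toFun 3 (tau K m)) ∧
      LinearIndependent K (Subtype.val : s → (EPath V 3 →₀ K)) ∧
      Submodule.span K s = Omega K V G 3 := by
  obtain ⟨s, hs_sub, hs_span, hs_li⟩ := exists_linearIndependent K (Statement11Proof.TSet K G)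
  refine ⟨s, ?_, hs_li, ?_⟩
  · intro x hx
    obtain ⟨⟨m, hm, f, hf⟩, -⟩ := hs_sub hx
    exact ⟨m, hm, f, hf⟩
  · rw [hs_span, Statement11Proof.span_TSet]
end
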